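/- arXiv:2110.05788 — 2 statements merged into one kernel-verified Lean document; each statement's English description precedes it below -/
import Mathlib

section
/- For every g in the stabilizer C(Γ^k(S)) of all rank-k germs of an orthohedral set S, the sum of the corank-1 germ flows over all rank-k germs vanishes: Σ_{γ ∈ Γ^k(S)} fl_γ(g) = 0. -/
open Pointwise

namespace PeiPaper

/-- Points of the face of the standard orthant spanned by the canonical basis vectors in `Y`. -/
def stdFace (N : ℕ) (Y : Finset (Fin N)) : Set (Fin N → ℤ) :=
  {v | (∀ i, 0 ≤ v i) ∧ ∀ i, i ∉ Y → v i = 0}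

/-- Integral orthogonal matrix. -/
def IsOrthMat {N : ℕ} (A : Matrix (Fin N) (Fin N) ℤ) : Prop :=
  A * A.transpose = 1

/-- `L` is an integral orthant of rank `k` in `ℤ^N`: an affine-orthogonal image of a
rank-`k` face of the standard orthant. -/
def IsOrthantOfRank {N : ℕ} (L : Set (Fin N → ℤ)) (k : ℕ) : Prop :=
  ∃ (a : Fin N → ℤ) (A : Matrix (Fin N) (Fin N) ℤ) (Y : Finset (Fin N)),
    IsOrthMat A ∧ Y.card = k ∧ L = (fun v => a + A.mulVec v) '' stdFace N Y

def IsOrthant {N : ℕ} (L : Set (Fin N → ℤ)) : Prop := ∃ k, IsOrthantOfRank L k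

/-- `S` is orthohedral: a finite union of integral orthants. -/
def IsOrthohedral {N : ℕ} (S : Set (Fin N → ℤ)) : Prop :=
  ∃ 𝓛 : Set (Set (Fin N → ℤ)), 𝓛.Finite ∧ (∀ L ∈ 𝓛, IsOrthant L) ∧ S = ⋃₀ 𝓛

/-- The rank of a set: the maximal rank of an orthant contained in it. -/
noncomputable def orthRank {N : ℕ} (S : Set (Fin N → ℤ)) : ℕ :=
  sSup {k | ∃ L, IsOrthantOfRank L k ∧ L ⊆ S}

/-- Commensurability: the intersection is nonempty and has the same rank as both sets. -/
def Commensurable {N : ℕ} (L L' : Set (Fin N → ℤ)) : Prop :=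
  (L ∩ L').Nonempty ∧ orthRank L = orthRank (L ∩ L') ∧ orthRank L' = orthRank (L ∩ L')

/-- The rank-`k` orthants contained in `S`. -/
def germSet {N : ℕ} (S : Set (Fin N → ℤ)) (k : ℕ) : Set (Set (Fin N → ℤ)) :=
  {L | IsOrthantOfRank L k ∧ L ⊆ S}

/-- The rank-`k` germs of `S`: commensurability classes of rank-`k` orthants of `S`. -/
def Germ {N : ℕ} (S : Set (Fin N → ℤ)) (k : ℕ) : Type _ :=
  Quot (fun L L' : germSet S k => Commensurable L.1 L'.1)

def germOf {N : ℕ} (S : Set (Fin N → ℤ)) (k : ℕ) (L : germSet S k) : Germ S k :=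
  Quot.mk _ L

/-- The number of rank-`k` germs of `S` (as a natural number; `0` if infinite). -/
noncomputable def heightAt {N : ℕ} (S : Set (Fin N → ℤ)) (k : ℕ) : ℕ :=
  Nat.card (Germ S k)

/-- The height of an orthohedral set: the number of germs of maximal rank. -/
noncomputable def height {N : ℕ} (S : Set (Fin N → ℤ)) : ℕ :=
  heightAt S (orthRank S)

/-- `f` is (the restriction of) an isometry of `ℤ^N` on `L`. -/
def IsometricOn {N : ℕ} (f : (Fin N → ℤ) → (Fin N → ℤ)) (L : Set (Fin N → ℤ)) : Prop :=
  ∃ (a : Fin N → ℤ) (A : Matrix (Fin N) (Fin N) ℤ),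
    IsOrthMat A ∧ ∀ x ∈ L, f x = a + A.mulVec x

/-- `f` is (the restriction of) a translation on `L`. -/
def TranslationOn {N : ℕ} (f : (Fin N → ℤ) → (Fin N → ℤ)) (L : Set (Fin N → ℤ)) : Prop :=
  ∃ a : Fin N → ℤ, ∀ x ∈ L, f x = a + x

/-- `f` is a piecewise-Euclidean-isometric map on `S`. -/
def IsPeiMapOn {N : ℕ} (S : Set (Fin N → ℤ)) (f : (Fin N → ℤ) → (Fin N → ℤ)) : Prop :=
  ∃ 𝓛 : Set (Set (Fin N → ℤ)), 𝓛.Finite ∧ (∀ L ∈ 𝓛, IsOrthant L) ∧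
    S = ⋃₀ 𝓛 ∧ 𝓛.PairwiseDisjoint id ∧ ∀ L ∈ 𝓛, IsometricOn f L

/-- `f` is a piecewise-Euclidean-translation map on `S`. -/
def IsPetMapOn {N : ℕ} (S : Set (Fin N → ℤ)) (f : (Fin N → ℤ) → (Fin N → ℤ)) : Prop :=
  ∃ 𝓛 : Set (Set (Fin N → ℤ)), 𝓛.Finite ∧ (∀ L ∈ 𝓛, IsOrthant L) ∧
    S = ⋃₀ 𝓛 ∧ 𝓛.PairwiseDisjoint id ∧ ∀ L ∈ 𝓛, TranslationOn f L

def IsPeiIso {N : ℕ} (S S' : Set (Fin N → ℤ)) (f : (Fin N → ℤ) → (Fin N → ℤ)) : Prop :=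
  IsPeiMapOn S f ∧ Set.InjOn f S ∧ f '' S = S'

def PeiIsomorphic {N : ℕ} (S S' : Set (Fin N → ℤ)) : Prop := ∃ f, IsPeiIso S S' f

def IsPetIso {N : ℕ} (S S' : Set (Fin N → ℤ)) (f : (Fin N → ℤ) → (Fin N → ℤ)) : Prop :=
  IsPetMapOn S f ∧ Set.InjOn f S ∧ f '' S = S'

def PetIsomorphic {N : ℕ} (S S' : Set (Fin N → ℤ)) : Prop := ∃ f, IsPetIso S S' f

/-- A pei-permutation of `S`: a permutation of `ℤ^N` supported on `S` which is pei on `S`. -/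
def IsPeiPerm {N : ℕ} (S : Set (Fin N → ℤ)) (g : Equiv.Perm (Fin N → ℤ)) : Prop :=
  IsPeiMapOn S ⇑g ∧ ∀ x ∉ S, g x = x

/-- The element `g` has rank at most `k`: it is supported on an orthohedral set of rank `≤ k`. -/
def rankLE {N : ℕ} (g : Equiv.Perm (Fin N → ℤ)) (k : ℕ) : Prop :=
  ∃ T : Set (Fin N → ℤ), IsOrthohedral T ∧ orthRank T ≤ k ∧ ∀ x ∉ T, g x = x

/-- `g` fixes every rank-`k` germ of `S`. -/
def FixesGerm {N : ℕ} (S : Set (Fin N → ℤ)) (k : ℕ) (g : Equiv.Perm (Fin N → ℤ)) : Prop :=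
  ∀ L, IsOrthantOfRank L k → L ⊆ S →
    ∃ L', IsOrthantOfRank L' k ∧ L' ⊆ L ∧ Commensurable L L' ∧
      IsometricOn (⇑g) L' ∧ Commensurable (⇑g '' L') L

/-- `g` fixes every rank-`k` germ of `S` and acts on its tangent coset by a translation. -/
def TranslatesGerm {N : ℕ} (S : Set (Fin N → ℤ)) (k : ℕ) (g : Equiv.Perm (Fin N → ℤ)) : Prop :=
  ∀ L, IsOrthantOfRank L k → L ⊆ S →
    ∃ L' a, IsOrthantOfRank L' k ∧ L' ⊆ L ∧ Commensurable L L' ∧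
      (∀ x ∈ L', g x = a + x) ∧ Commensurable (⇑g '' L') L

/-- `σ` is the map induced by `g` on the rank-`k` germs of `S`. -/
def InducesGermMap {N : ℕ} (S : Set (Fin N → ℤ)) (k : ℕ) (g : Equiv.Perm (Fin N → ℤ))
    (σ : Germ S k → Germ S k) : Prop :=
  ∀ L : germSet S k, ∃ (L'' : Set (Fin N → ℤ)) (M : germSet S k),
    IsOrthantOfRank L'' k ∧ L'' ⊆ L.1 ∧ Commensurable L.1 L'' ∧
    M.1 = ⇑g '' L'' ∧ σ (germOf S k L) = germOf S k M

/-- A finitary permutation which is even (has sign `1` on a finite invariant subset). -/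
def IsEvenFinitary {α : Type*} (σ : Equiv.Perm α) : Prop :=
  ∃ (F : Finset α) (σF : Equiv.Perm F),
    (∀ a ∉ F, σ a = a) ∧ (∀ a : F, σ (a : α) = (σF a : α)) ∧
    @Equiv.Perm.sign F (Classical.decEq _) inferInstance σF = 1

/-- `g` induces an even finitary permutation on the rank-`k` germs of `S`. -/
def IsEvenOnGerms {N : ℕ} (S : Set (Fin N → ℤ)) (k : ℕ) (g : Equiv.Perm (Fin N → ℤ)) : Prop :=
  ∃ σ : Equiv.Perm (Germ S k), InducesGermMap S k g ⇑σ ∧ IsEvenFinitary σ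

/-- Ordering of germs (of arbitrary ranks): `p ≤ q` if they have representatives `L ⊆ L'`. -/
def germLE {N : ℕ} (S : Set (Fin N → ℤ)) (p q : Σ k, Germ S k) : Prop :=
  ∃ (L : germSet S p.1) (L' : germSet S q.1),
    germOf S p.1 L = p.2 ∧ germOf S q.1 L' = q.2 ∧ L.1 ⊆ L'.1

/-- A maximal germ of `S`. -/
def IsMaxGerm {N : ℕ} (S : Set (Fin N → ℤ)) (p : Σ k, Germ S k) : Prop :=
  ∀ q, germLE S p q → germLE S q p

/-- A `0`-based orthant. -/
def IsBasedOrthant {N : ℕ} (L0 : Set (Fin N → ℤ)) : Prop :=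
  ∃ (A : Matrix (Fin N) (Fin N) ℤ) (Y : Finset (Fin N)),
    IsOrthMat A ∧ L0 = (fun v => A.mulVec v) '' stdFace N Y

/-- Two (oriented) parallel orthants. -/
def ParallelOrthants {N : ℕ} (L L' : Set (Fin N → ℤ)) : Prop :=
  ∃ a : Fin N → ℤ, L' = a +ᵥ L

/-- The indicator image `S_τ` of `S`: the union of the `0`-based parallel translates of
the orthants contained in `S`. -/
def indicatorImage {N : ℕ} (S : Set (Fin N → ℤ)) : Set (Fin N → ℤ) :=
  ⋃₀ {L0 | IsBasedOrthant L0 ∧ ∃ a : Fin N → ℤ, (a +ᵥ L0) ⊆ S}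

/-- The height function `h_S`: the number of maximal germs of `S` whose indicator is `L0`. -/
noncomputable def hFun {N : ℕ} (S : Set (Fin N → ℤ)) (L0 : Set (Fin N → ℤ)) : ℕ :=
  Nat.card {p : Σ k, Germ S k //
    IsMaxGerm S p ∧ ∃ L : germSet S p.1, germOf S p.1 L = p.2 ∧ ∃ a : Fin N → ℤ, L.1 = a +ᵥ L0}

/-- `S` is quasi-normal: the maximal based orthants of `S_τ` are exactly the support of `h_S`. -/
def QuasiNormal {N : ℕ} (S : Set (Fin N → ℤ)) : Prop :=
  ∀ L0 : Set (Fin N → ℤ),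
    (IsBasedOrthant L0 ∧ L0 ⊆ indicatorImage S ∧
      ∀ L1, IsBasedOrthant L1 → L1 ⊆ indicatorImage S → L0 ⊆ L1 → L1 ⊆ L0)
    ↔ (IsBasedOrthant L0 ∧ 0 < hFun S L0)

/-- The germ `q` of `S'` is the image of the germ `p` of `S` under the injective pei-map `f`. -/
def GermMapsTo {N : ℕ} (f : (Fin N → ℤ) → (Fin N → ℤ)) (S S' : Set (Fin N → ℤ))
    (p : Σ k, Germ S k) (q : Σ k, Germ S' k) : Prop :=
  p.1 = q.1 ∧ ∃ (L : germSet S p.1) (L'' : Set (Fin N → ℤ)) (M : germSet S' q.1),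
    germOf S p.1 L = p.2 ∧ IsOrthantOfRank L'' p.1 ∧ L'' ⊆ L.1 ∧ Commensurable L.1 L'' ∧
    M.1 = f '' L'' ∧ germOf S' q.1 M = q.2

/-- A stack of `h` parallel rank-`n` orthants. -/
def IsStack {N : ℕ} (S : Set (Fin N → ℤ)) (n h : ℕ) : Prop :=
  ∃ (L0 : Set (Fin N → ℤ)) (a : Fin h → (Fin N → ℤ)),
    IsOrthantOfRank L0 n ∧
    (Pairwise fun i j => Disjoint (a i +ᵥ L0) (a j +ᵥ L0)) ∧
    S = ⋃ i, a i +ᵥ L0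

/-- A coordinate half-space of `ℤ^N`. -/
def IsHalfSpace {N : ℕ} (H : Set (Fin N → ℤ)) : Prop :=
  ∃ (i : Fin N) (c : ℤ), H = {x | x i ≤ c} ∨ H = {x | c ≤ x i}

/-- The canonical embedding `ℤ^N → ℤ^{N+1}`. -/
def emb (N : ℕ) (x : Fin N → ℤ) : Fin (N + 1) → ℤ :=
  fun i => if h : (i : ℕ) < N then x ⟨i, h⟩ else 0

/-- The sum of all matrix entries of a finitely supported family of vectors. -/
noncomputable def totalSum (k : ℕ) (Γ : Type*) : (Γ →₀ (Fin k → ℤ)) →+ ℤ :=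
  Finsupp.liftAddHom (fun _ => ∑ i : Fin k, Pi.evalAddMonoidHom (fun _ => ℤ) i)

/-- The clique (flag) complex of a graph. -/
def cliqueComplex {V : Type*} (G : SimpleGraph V) : Set (Finset V) :=
  {s | s.Nonempty ∧ G.IsClique (s : Set V)}

/-- The geometric realization of a simplicial complex on vertex set `V`. -/
def realization {V : Type*} (K : Set (Finset V)) : Set (V → ℝ) :=
  {f | (∀ v, 0 ≤ f v) ∧ ∃ s ∈ K, Function.support f ⊆ ↑s ∧ ∑ v ∈ s, f v = 1}

/-- A wedge (bouquet) of `n`-spheres indexed by `ι`, with basepoint `b`. -/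
noncomputable def wedgeSpheres (ι : Type) (n : ℕ)
    (b : Metric.sphere (0 : EuclideanSpace ℝ (Fin (n + 1))) 1) : Type :=
  Quot (fun p q : Unit ⊕ (ι × Metric.sphere (0 : EuclideanSpace ℝ (Fin (n + 1))) 1) =>
    (Sum.elim (fun _ => True) (fun pr => pr.2 = b) p) ∧
    (Sum.elim (fun _ => True) (fun qr => qr.2 = b) q))

noncomputable instance (ι : Type) (n : ℕ) (b : Metric.sphere (0 : EuclideanSpace ℝ (Fin (n + 1))) 1) :
    TopologicalSpace (wedgeSpheres ι n b) :=
  letI : TopologicalSpace ι := ⊥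
  instTopologicalSpaceQuot



set_option linter.unusedVariables false
set_option linter.unreachableTactic false
set_option linter.unusedTactic false
set_option linter.unnecessarySeqFocus false
namespace Stmt9Aux

open Finset

variable {N : ℕ}

/-- Orthant data: corner `p`, free coordinates `D`, directions `s`. -/
structure OD (N : ℕ) where
  p : Fin N → ℤ
  D : Finset (Fin N)
  s : Fin N → Bool

/-- A (possibly reversed) ray condition. -/
def cond (b : Bool) (v z : ℤ) : Prop := if b then v ≤ z else z ≤ v

lemma cond_refl (b : Bool) (v : ℤ) : cond b v v := by cases b <;> simp [cond]

lemma cond_trans {b : Bool} {v w z : ℤ} (h1 : cond b v w) (h2 : cond b w z) :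
    cond b v z := by cases b <;> simp_all [cond] <;> omega

def OD.set (o : OD N) : Set (Fin N → ℤ) :=
  {x | (∀ i ∈ o.D, cond (o.s i) (o.p i) (x i)) ∧ (∀ i ∉ o.D, x i = o.p i)}

lemma OD.mem_set {o : OD N} {x : Fin N → ℤ} :
    x ∈ o.set ↔ (∀ i ∈ o.D, cond (o.s i) (o.p i) (x i)) ∧ (∀ i ∉ o.D, x i = o.p i) :=
  Iff.rfl

lemma OD.corner_mem (o : OD N) : o.p ∈ o.set :=
  ⟨fun i _ => cond_refl _ _, fun _ _ => rfl⟩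

lemma OD.set_nonempty (o : OD N) : o.set.Nonempty := ⟨o.p, o.corner_mem⟩

/-- Same commensurability class. -/
def SameCls (o o' : OD N) : Prop :=
  o.D = o'.D ∧ (∀ i ∈ o.D, o.s i = o'.s i) ∧ (∀ i ∉ o.D, o.p i = o'.p i)

lemma SameCls.refl (o : OD N) : SameCls o o := ⟨rfl, fun _ _ => rfl, fun _ _ => rfl⟩

lemma SameCls.symm {o o' : OD N} (h : SameCls o o') : SameCls o' o := by
  obtain ⟨h1, h2, h3⟩ := h
  exact ⟨h1.symm, fun i hi => (h2 i (h1 ▸ hi)).symm, fun i hi => (h3 i (h1 ▸ hi)).symm⟩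

lemma SameCls.trans {o o' o'' : OD N} (h : SameCls o o') (h' : SameCls o' o'') :
    SameCls o o'' := by
  obtain ⟨h1, h2, h3⟩ := h
  obtain ⟨h1', h2', h3'⟩ := h'
  refine ⟨h1.trans h1', fun i hi => (h2 i hi).trans (h2' i (h1 ▸ hi)), 
    fun i hi => (h3 i hi).trans (h3' i (h1 ▸ hi))⟩

lemma SameCls.card_eq {o o' : OD N} (h : SameCls o o') : o.D.card = o'.D.card := by
  rw [h.1]

/-- If `o'` has the same class and its corner lies in `o.set`, then `o'.set ⊆ o.set`. -/
lemma subset_of_sameCls_corner {o o' : OD N} (h : SameCls o o') (hc : o'.p ∈ o.set) :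
    o'.set ⊆ o.set := by
  rintro x ⟨hx1, hx2⟩
  constructor
  · intro i hi
    have hi' : i ∈ o'.D := h.1 ▸ hi
    have := hx1 i hi'
    rw [← h.2.1 i hi] at this
    exact cond_trans (hc.1 i hi) this
  · intro i hi
    have hi' : i ∉ o'.D := h.1 ▸ hi
    rw [hx2 i hi', ← h.2.2 i hi]

/-- Test points: move along coordinate `i` from the corner. -/
def OD.ptAt (o : OD N) (i : Fin N) (t : ℕ) : Fin N → ℤ :=
  fun i' => if i' = i then o.p i + (if o.s i then (t : ℤ) else -(t : ℤ)) else o.p i'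

lemma OD.ptAt_mem (o : OD N) {i : Fin N} (hi : i ∈ o.D) (t : ℕ) : o.ptAt i t ∈ o.set := by
  constructor
  · intro i' hi'
    by_cases hii : i' = i
    · subst hii
      simp only [ptAt, if_pos rfl]
      cases h : o.s i' <;> simp [cond, h] <;> omega
    · simp only [ptAt, if_neg hii]
      exact cond_refl _ _
  · intro i' hi'
    have : i' ≠ i := fun hh => hi' (hh ▸ hi)
    simp [ptAt, this]

lemma OD.ptAt_apply_self (o : OD N) (i : Fin N) (t : ℕ) :
    o.ptAt i t i = o.p i + (if o.s i then (t : ℤ) else -(t : ℤ)) := by simp [ptAt]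

/-- Structural consequences of inclusion of orthants. -/
lemma subset_structure {o o' : OD N} (h : o.set ⊆ o'.set) :
    o.D ⊆ o'.D ∧ (∀ i ∈ o.D, o.s i = o'.s i) ∧ (∀ i ∉ o'.D, o.p i = o'.p i) ∧
      (∀ i ∈ o'.D, cond (o'.s i) (o'.p i) (o.p i)) := by
  have hcorner := h o.corner_mem
  have hD : o.D ⊆ o'.D := by
    intro i hi
    by_contra hi'
    have h0 := (h (o.ptAt_mem hi 0)).2 i hi'
    have h1 := (h (o.ptAt_mem hi 1)).2 i hi'
    rw [OD.ptAt_apply_self] at h0 h1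
    cases hs : o.s i <;> simp only [hs] at h0 h1 <;> simp at h0 h1 <;>
      rw [h0] at h1 <;> omega
  refine ⟨hD, ?_, fun i hi => hcorner.2 i hi, fun i hi => hcorner.1 i hi⟩
  intro i hi
  by_contra hs
  set t : ℕ := ((o'.p i - o.p i).natAbs + (o.p i - o'.p i).natAbs + 1) with ht
  have hmem := (h (o.ptAt_mem hi t)).1 i (hD hi)
  rw [OD.ptAt_apply_self] at hmem
  cases hs1 : o.s i <;> cases hs2 : o'.s i <;> rw [hs1] at hmem hs <;> rw [hs2] at hmem hs
  · exact hs rfl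
  · simp [cond] at hmem
    omega
  · simp [cond] at hmem
    omega
  · exact hs rfl

lemma sameCls_of_subset_card {o o' : OD N} (h : o.set ⊆ o'.set)
    (hc : o.D.card = o'.D.card) : SameCls o o' := by
  obtain ⟨h1, h2, h3, _⟩ := subset_structure h
  have hD : o.D = o'.D := Finset.eq_of_subset_of_card_le h1 (le_of_eq hc.symm)
  exact ⟨hD, h2, fun i hi => h3 i (hD ▸ hi)⟩

lemma sameCls_of_set_eq {o o' : OD N} (h : o.set = o'.set) : SameCls o o' := by
  obtain ⟨h1, h2, h3, _⟩ := subset_structure h.le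
  obtain ⟨h1', _, _, _⟩ := subset_structure h.ge
  have hD : o.D = o'.D := le_antisymm h1 h1'
  exact ⟨hD, h2, fun i hi => h3 i (hD ▸ hi)⟩

/-- Corner of the intersection of two same-class orthants. -/
def interOD (o o' : OD N) : OD N :=
  ⟨fun i => if i ∈ o.D then (if o.s i then max (o.p i) (o'.p i) else min (o.p i) (o'.p i))
    else o.p i, o.D, o.s⟩

lemma interOD_sameCls (o o' : OD N) : SameCls o (interOD o o') := by
  refine ⟨rfl, fun _ _ => rfl, fun i hi => ?_⟩
  simp [interOD, hi]

lemma interOD_set {o o' : OD N} (h : SameCls o o') :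
    (interOD o o').set = o.set ∩ o'.set := by
  ext x
  simp only [OD.mem_set, Set.mem_inter_iff, interOD]
  constructor
  · rintro ⟨ha, hb⟩
    refine ⟨⟨fun i hi => ?_, fun i hi => ?_⟩, ⟨fun i hi => ?_, fun i hi => ?_⟩⟩
    · have hh := ha i hi
      simp only [if_pos hi] at hh
      cases hs : o.s i <;> simp only [hs, cond, if_true, if_false] at hh ⊢ <;>
        simp at hh ⊢
      · exact hh.1
      · exact hh.1
    · have := hb i hi
      simp only [if_neg hi] at this
      exact this
    · have hi' : i ∈ o.D := h.1 ▸ hi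
      have hh := ha i hi'
      simp only [if_pos hi'] at hh
      rw [← h.2.1 i hi']
      cases hs : o.s i <;> simp only [hs, cond, if_true, if_false] at hh ⊢ <;>
        simp at hh ⊢
      · exact hh.2
      · exact hh.2
    · have hi' : i ∉ o.D := h.1 ▸ hi
      have := hb i hi'
      simp only [if_neg hi'] at this
      rw [this, ← h.2.2 i hi']
  · rintro ⟨⟨ha, hb⟩, ⟨ha', hb'⟩⟩
    refine ⟨fun i hi => ?_, fun i hi => ?_⟩
    · have h1 := ha i hi
      have h2 := ha' i (h.1 ▸ hi)
      rw [← h.2.1 i hi] at h2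
      simp only [if_pos hi]
      cases hs : o.s i <;> simp only [hs, cond, if_true, if_false] at h1 h2 ⊢ <;>
        simp at h1 h2 ⊢
      · exact ⟨h1, h2⟩
      · exact ⟨h1, h2⟩
    · simp only [if_neg hi]
      exact hb i hi

lemma interOD_mem_left {o o' : OD N} (x : Fin N → ℤ) (hx : x ∈ (interOD o o').set) :
    x ∈ o.set := by
  have := subset_of_sameCls_corner (o := o) (o' := interOD o o') (interOD_sameCls o o') ?_
  · exact this hx
  · constructor
    · intro i hi
      simp only [interOD, if_pos hi]
      cases hs : o.s i <;> simp [cond, hs]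
    · intro i hi
      simp [interOD, hi]

lemma sameCls_inter_nonempty {o o' : OD N} (h : SameCls o o') :
    (o.set ∩ o'.set).Nonempty := by
  rw [← interOD_set h]
  exact (interOD o o').set_nonempty

/-- Normalized class representative. -/
def OD.cls (o : OD N) : OD N :=
  ⟨fun i => if i ∈ o.D then 0 else o.p i, o.D, fun i => if i ∈ o.D then o.s i else false⟩

lemma sameCls_cls_self (o : OD N) : SameCls o o.cls := by
  refine ⟨rfl, fun i hi => ?_, fun i hi => ?_⟩ <;> simp [OD.cls, hi]

lemma cls_eq_iff {o o' : OD N} : o.cls = o'.cls ↔ SameCls o o' := by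
  constructor
  · intro h
    have hD : o.D = o'.D := congrArg (fun z => z.D) h
    have hp := congrArg (fun z => z.p) h
    have hs := congrArg (fun z => z.s) h
    refine ⟨hD, fun i hi => ?_, fun i hi => ?_⟩
    · have := congrFun hs i
      simp only [OD.cls, if_pos hi, if_pos (hD ▸ hi : i ∈ o'.D)] at this
      exact this
    · have := congrFun hp i
      simp only [OD.cls, if_neg hi, if_neg (hD ▸ hi : i ∉ o'.D)] at this
      exact this
  · rintro ⟨h1, h2, h3⟩
    simp only [OD.cls]
    congr 1 <;> try exact h1
    · funext i
      by_cases hi : i ∈ o.D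
      · simp [hi, h1 ▸ hi]
      · simp only [if_neg hi, if_neg (h1 ▸ hi : i ∉ o'.D)]
        exact h3 i hi
    · funext i
      by_cases hi : i ∈ o.D
      · simp only [if_pos hi, if_pos (h1 ▸ hi : i ∈ o'.D)]
        exact h2 i hi
      · simp [hi, h1 ▸ hi]

lemma cls_D (o : OD N) : o.cls.D = o.D := rfl

lemma cls_idem (o : OD N) : o.cls.cls = o.cls :=
  cls_eq_iff.mpr (sameCls_cls_self o).symm

end Stmt9Aux

namespace Stmt9Aux

open Finset

variable {N : ℕ}

lemma isOrthMat_rows {A : Matrix (Fin N) (Fin N) ℤ} (hA : IsOrthMat A) (i i' : Fin N) :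
    (∑ j, A i j * A i' j) = if i = i' then 1 else 0 := by
  have h := congrArg (fun M => M i i') hA
  simpa [Matrix.mul_apply, Matrix.one_apply, Matrix.transpose_apply] using h

lemma exists_unique_support {f : Fin N → ℤ} (hf : ∑ j, f j * f j = 1) :
    ∃ j₀, (f j₀ = 1 ∨ f j₀ = -1) ∧ ∀ j, j ≠ j₀ → f j = 0 := by
  have hex : ∃ j₀, f j₀ ≠ 0 := by
    by_contra hc
    push_neg at hc
    simp [hc] at hf
  obtain ⟨j₀, hj₀⟩ := hex
  have hsplit : f j₀ * f j₀ + ∑ j ∈ univ.erase j₀, f j * f j = ∑ j, f j * f j :=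
    Finset.add_sum_erase univ (fun j => f j * f j) (mem_univ j₀)
  have hpos : 0 < f j₀ * f j₀ := mul_self_pos.mpr hj₀
  have hrest_nonneg : 0 ≤ ∑ j ∈ univ.erase j₀, f j * f j :=
    Finset.sum_nonneg fun j _ => mul_self_nonneg _
  have hrest : ∑ j ∈ univ.erase j₀, f j * f j = 0 := by omega
  have hzero := (Finset.sum_eq_zero_iff_of_nonneg fun j _ => mul_self_nonneg (f j)).mp hrest
  refine ⟨j₀, ?_, fun j hj => ?_⟩
  · have h1 : f j₀ * f j₀ = 1 := by omega
    exact mul_self_eq_one_iff.mp h1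
  · exact mul_self_eq_zero.mp (hzero j (mem_erase.mpr ⟨hj, mem_univ j⟩))

lemma orthMat_normal {A : Matrix (Fin N) (Fin N) ℤ} (hA : IsOrthMat A) :
    ∃ (c : Fin N ≃ Fin N) (ε : Fin N → ℤ),
      (∀ i, ε i = 1 ∨ ε i = -1) ∧
      (∀ v i, A.mulVec v i = ε i * v (c i)) := by
  have hrow : ∀ i, ∑ j, A i j * A i j = 1 := by
    intro i
    simpa using isOrthMat_rows hA i i
  choose c₀ hc₀ hc₀' using fun i => exists_unique_support (hrow i)
  have hinj : Function.Injective c₀ := by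
    intro i i' hii
    by_contra hne
    have h0 := isOrthMat_rows hA i i'
    rw [if_neg hne] at h0
    rw [Finset.sum_eq_single (c₀ i)] at h0
    · have h1 : A i (c₀ i) ≠ 0 := by rcases hc₀ i with h | h <;> rw [h] <;> simp
      have h2 : A i' (c₀ i) ≠ 0 := by
        rw [hii]
        rcases hc₀ i' with h | h <;> rw [h] <;> simp
      exact mul_ne_zero h1 h2 h0
    · intro j _ hj
      rw [hc₀' i j hj, zero_mul]
    · simp
  have hbij : Function.Bijective c₀ := ⟨hinj, Finite.surjective_of_injective hinj⟩
  refine ⟨Equiv.ofBijective c₀ hbij, fun i => A i (c₀ i), hc₀, fun v i => ?_⟩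
  have hv : A.mulVec v i = ∑ j, A i j * v j := by
    simp [Matrix.mulVec, dotProduct]
  rw [hv, Finset.sum_eq_single (c₀ i)]
  · rfl
  · intro j _ hj
    rw [hc₀' i j hj, zero_mul]
  · simp

/-- Backward bridge: every orthant datum gives an orthant. -/
lemma orthant_of_OD (o : OD N) : IsOrthantOfRank o.set o.D.card := by
  classical
  set ε : Fin N → ℤ := fun i => if o.s i then 1 else -1 with hε
  have hεsq : ∀ i, ε i * ε i = 1 := by
    intro i
    by_cases h : o.s i <;> simp [hε, h]
  refine ⟨o.p, Matrix.diagonal ε, o.D, ?_, rfl, ?_⟩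
  · show Matrix.diagonal ε * (Matrix.diagonal ε).transpose = 1
    rw [Matrix.diagonal_transpose, Matrix.diagonal_mul_diagonal]
    have h1 : (fun i => ε i * ε i) = fun _ => (1:ℤ) := funext hεsq
    rw [h1, Matrix.diagonal_one]
  · ext x
    constructor
    · rintro ⟨hx1, hx2⟩
      refine ⟨fun i => ε i * (x i - o.p i), ⟨fun i => ?_, fun i hi => ?_⟩, ?_⟩
      · by_cases hi : i ∈ o.D
        · have hc1 := hx1 i hi
          try dsimp only
          cases hs : o.s i <;> rw [hs] at hc1 <;> simp [cond] at hc1 <;>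
            simp [hε, hs] <;> omega
        · simp [hx2 i hi]
      · simp [hx2 i hi]
      · funext i
        simp only [Pi.add_apply, Matrix.mulVec_diagonal]
        try dsimp only
        have h2 : ε i * (ε i * (x i - o.p i)) = x i - o.p i := by
          rw [← mul_assoc, hεsq i, one_mul]
        rw [h2]
        ring
    · rintro ⟨v, ⟨hv1, hv2⟩, rfl⟩
      constructor
      · intro i hi
        have hvi := hv1 i
        simp only [Pi.add_apply, Matrix.mulVec_diagonal]
        cases hs : o.s i <;> simp [cond, hε, hs] <;> omega
      · intro i hi
        simp [Pi.add_apply, Matrix.mulVec_diagonal, hv2 i hi]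

/-- Forward bridge. -/
lemma exists_OD_of_orthant {L : Set (Fin N → ℤ)} {r : ℕ} (h : IsOrthantOfRank L r) :
    ∃ o : OD N, o.D.card = r ∧ L = o.set := by
  classical
  obtain ⟨a, A, Y, hA, hY, hL⟩ := h
  obtain ⟨c, ε, hε, hmul⟩ := orthMat_normal hA
  have hεsq : ∀ i, ε i * ε i = 1 := by
    intro i
    rcases hε i with h | h <;> rw [h] <;> ring
  refine ⟨⟨a, univ.filter (fun i => c i ∈ Y), fun i => decide (ε i = 1)⟩, ?_, ?_⟩
  · rw [← hY]
    have : univ.filter (fun i => c i ∈ Y) = Y.map c.symm.toEmbedding := by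
      ext i
      simp only [mem_filter, mem_univ, true_and, mem_map, Equiv.coe_toEmbedding]
      constructor
      · intro hi
        exact ⟨c i, hi, by simp⟩
      · rintro ⟨y, hy, rfl⟩
        simpa using hy
    rw [this, Finset.card_map]
  · rw [hL]
    ext x
    constructor
    · rintro ⟨v, ⟨hv1, hv2⟩, rfl⟩
      constructor
      · intro i hi
        try dsimp only at hi ⊢
        simp only [mem_filter, mem_univ, true_and] at hi
        have hvi := hv1 (c i)
        simp only [Pi.add_apply, hmul]
        rcases hε i with h | h <;> rw [h] <;> simp [cond, h] <;> omega
      · intro i hi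
        try dsimp only at hi ⊢
        simp only [mem_filter, mem_univ, true_and] at hi
        simp [Pi.add_apply, hmul, hv2 (c i) hi]
    · rintro ⟨hx1, hx2⟩
      try dsimp only at hx1 hx2
      refine ⟨fun j => ε (c.symm j) * (x (c.symm j) - a (c.symm j)), ⟨fun j => ?_, fun j hj => ?_⟩, ?_⟩
      · by_cases hi : (c.symm j) ∈ univ.filter (fun i => c i ∈ Y)
        · have hc1 := hx1 _ hi
          try dsimp only
          rcases hε (c.symm j) with h | h <;> rw [h] at hc1 ⊢ <;>
            simp [cond] at hc1 <;> omega
        · try dsimp only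
          simp [hx2 _ hi]
      · have hi : (c.symm j) ∉ univ.filter (fun i => c i ∈ Y) := by
          simp only [mem_filter, mem_univ, true_and]
          simpa using hj
        try dsimp only
        simp [hx2 _ hi]
      · funext i
        simp only [Pi.add_apply, hmul, Equiv.symm_apply_apply]
        rw [← mul_assoc, hεsq i, one_mul]
        ring

lemma card_le_of_orthant_subset {L' : Set (Fin N → ℤ)} {r' : ℕ} {o : OD N}
    (h : IsOrthantOfRank L' r') (hsub : L' ⊆ o.set) : r' ≤ o.D.card := by
  obtain ⟨o', ho'c, rfl⟩ := exists_OD_of_orthant h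
  rw [← ho'c]
  exact Finset.card_le_card (subset_structure hsub).1

lemma bddAbove_rankSet (X : Set (Fin N → ℤ)) :
    BddAbove {k | ∃ L, IsOrthantOfRank L k ∧ L ⊆ X} := by
  refine ⟨N, fun r hr => ?_⟩
  obtain ⟨L, ⟨a, A, Y, hA, hY, hL⟩, _⟩ := hr
  rw [← hY]
  simpa using Finset.card_le_card (Finset.subset_univ Y)

lemma point_orthant (x : Fin N → ℤ) : IsOrthantOfRank {x} 0 := by
  have h := orthant_of_OD (⟨x, ∅, fun _ => false⟩ : OD N)
  have : (⟨x, ∅, fun _ => false⟩ : OD N).set = {x} := by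
    ext y
    simp only [OD.mem_set, Finset.notMem_empty, Set.mem_singleton_iff]
    constructor
    · rintro ⟨_, h2⟩
      funext i
      exact h2 i (by simp)
    · rintro rfl
      exact ⟨fun i hi => absurd hi (by simp), fun i _ => rfl⟩
  rwa [this, Finset.card_empty] at h

lemma orthRank_orthant (o : OD N) : orthRank o.set = o.D.card := by
  apply le_antisymm
  · apply csSup_le'
    rintro r ⟨L', hL', hsub⟩
    exact card_le_of_orthant_subset hL' hsub
  · exact le_csSup (bddAbove_rankSet _) ⟨o.set, orthant_of_OD o, subset_rfl⟩

lemma commensurable_iff_sameCls {o o' : OD N} {r : ℕ} (hc : o.D.card = r)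
    (hc' : o'.D.card = r) : Commensurable o.set o'.set ↔ SameCls o o' := by
  constructor
  · rintro ⟨hne, h1, h2⟩
    rw [orthRank_orthant, hc] at h1
    have hmem : r ∈ {k | ∃ L, IsOrthantOfRank L k ∧ L ⊆ o.set ∩ o'.set} := by
      rw [show r = orthRank (o.set ∩ o'.set) from h1]
      apply Nat.sSup_mem
      · obtain ⟨x, hx⟩ := hne
        exact ⟨0, {x}, point_orthant x, Set.singleton_subset_iff.mpr hx⟩
      · exact bddAbove_rankSet _
    obtain ⟨M, hM, hMsub⟩ := hmem
    obtain ⟨oM, hoMc, rfl⟩ := exists_OD_of_orthant hM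
    have s1 : SameCls oM o :=
      sameCls_of_subset_card (hMsub.trans Set.inter_subset_left) (by rw [hoMc, hc])
    have s2 : SameCls oM o' :=
      sameCls_of_subset_card (hMsub.trans Set.inter_subset_right) (by rw [hoMc, hc'])
    exact s1.symm.trans s2
  · intro h
    have hint : o.set ∩ o'.set = (interOD o o').set := (interOD_set h).symm
    refine ⟨sameCls_inter_nonempty h, ?_, ?_⟩
    · rw [hint, orthRank_orthant, orthRank_orthant]
      rfl
    · rw [hint, orthRank_orthant, orthRank_orthant]
      show o'.D.card = o.D.card
      rw [h.1]

lemma isOrthMat_mul {A B : Matrix (Fin N) (Fin N) ℤ} (hA : IsOrthMat A) (hB : IsOrthMat B) :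
    IsOrthMat (A * B) := by
  show (A * B) * (A * B).transpose = 1
  rw [Matrix.transpose_mul]
  calc A * B * (B.transpose * A.transpose) = A * (B * B.transpose) * A.transpose := by
        noncomm_ring
    _ = 1 := by rw [hB, Matrix.mul_one, hA]

lemma isOrthMat_transpose {A : Matrix (Fin N) (Fin N) ℤ} (hA : IsOrthMat A) :
    IsOrthMat A.transpose := by
  show A.transpose * A.transpose.transpose = 1
  rw [Matrix.transpose_transpose]
  exact mul_eq_one_comm.mp hA

lemma isOrthantOfRank_affine_image {L : Set (Fin N → ℤ)} {r : ℕ} (a : Fin N → ℤ)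
    {A : Matrix (Fin N) (Fin N) ℤ} (hA : IsOrthMat A) (h : IsOrthantOfRank L r) :
    IsOrthantOfRank ((fun x => a + A.mulVec x) '' L) r := by
  obtain ⟨a₀, A₀, Y, hA₀, hY, rfl⟩ := h
  refine ⟨a + A.mulVec a₀, A * A₀, Y, isOrthMat_mul hA hA₀, hY, ?_⟩
  rw [← Set.image_comp]
  apply Set.image_congr
  intro v _
  simp only [Function.comp_apply]
  rw [Matrix.mulVec_add, ← Matrix.mulVec_mulVec]
  abel

lemma affine_left_inverse {A : Matrix (Fin N) (Fin N) ℤ} (hA : IsOrthMat A)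
    (a x : Fin N → ℤ) :
    -(A.transpose.mulVec a) + A.transpose.mulVec (a + A.mulVec x) = x := by
  rw [Matrix.mulVec_add, Matrix.mulVec_mulVec, mul_eq_one_comm.mp hA, Matrix.one_mulVec]
  abel

end Stmt9Aux

namespace Stmt9Aux

open Finset

variable {N : ℕ}

/-- The classes of rank-`j` orthants contained in `X`. -/
def mu (j : ℕ) (X : Set (Fin N → ℤ)) : Set (OD N) :=
  {c | ∃ o : OD N, o.cls = c ∧ o.D.card = j ∧ o.set ⊆ X}

lemma mu_mono {j : ℕ} {X Y : Set (Fin N → ℤ)} (h : X ⊆ Y) : mu j X ⊆ mu j Y := by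
  rintro c ⟨o, rfl, hc, hsub⟩
  exact ⟨o, rfl, hc, hsub.trans h⟩

lemma cls_mem_mu {j : ℕ} {X : Set (Fin N → ℤ)} {o : OD N} (hc : o.D.card = j)
    (hsub : o.set ⊆ X) : o.cls ∈ mu j X := ⟨o, rfl, hc, hsub⟩

lemma mu_D_card {j : ℕ} {X : Set (Fin N → ℤ)} {c : OD N} (hc : c ∈ mu j X) :
    c.D.card = j := by
  obtain ⟨o, rfl, h, _⟩ := hc
  rwa [cls_D]

lemma mu_cls_self {j : ℕ} {X : Set (Fin N → ℤ)} {c : OD N} (hc : c ∈ mu j X) :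
    c.cls = c := by
  obtain ⟨o, rfl, _, _⟩ := hc
  exact cls_idem o

lemma mu_inter_nonempty {j : ℕ} {X Y : Set (Fin N → ℤ)} {c : OD N} (h1 : c ∈ mu j X)
    (h2 : c ∈ mu j Y) : (X ∩ Y).Nonempty := by
  obtain ⟨o, ho, hc, hsub⟩ := h1
  obtain ⟨o', ho', hc', hsub'⟩ := h2
  have hs : SameCls o o' := cls_eq_iff.mp (ho.trans ho'.symm)
  obtain ⟨x, hx, hx'⟩ := sameCls_inter_nonempty hs
  exact ⟨x, hsub hx, hsub' hx'⟩

lemma mu_disjoint_of_disjoint {j : ℕ} {X Y : Set (Fin N → ℤ)} (h : Disjoint X Y) :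
    Disjoint (mu j X) (mu j Y) := by
  rw [Set.disjoint_left]
  intro c hcX hcY
  obtain ⟨x, hx1, hx2⟩ := mu_inter_nonempty hcX hcY
  exact (Set.disjoint_left.mp h) hx1 hx2

noncomputable def odOfGerm {X : Set (Fin N → ℤ)} {j : ℕ} (L : germSet X j) : OD N :=
  Classical.choose (exists_OD_of_orthant (L.2.1 : IsOrthantOfRank L.1 j))

lemma odOfGerm_spec {X : Set (Fin N → ℤ)} {j : ℕ} (L : germSet X j) :
    (odOfGerm L).D.card = j ∧ L.1 = (odOfGerm L).set :=
  Classical.choose_spec (exists_OD_of_orthant (L.2.1 : IsOrthantOfRank L.1 j))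

noncomputable def germCls {X : Set (Fin N → ℤ)} {j : ℕ} : Germ X j → OD N :=
  Quot.lift (fun L => (odOfGerm L).cls) (by
    intro L L' h
    have h1 := odOfGerm_spec L
    have h2 := odOfGerm_spec L'
    have hcomm : Commensurable (odOfGerm L).set (odOfGerm L').set := by
      rw [← h1.2, ← h2.2]
      exact h
    exact cls_eq_iff.mpr ((commensurable_iff_sameCls h1.1 h2.1).mp hcomm))

lemma germCls_mem {X : Set (Fin N → ℤ)} {j : ℕ} (q : Germ X j) : germCls q ∈ mu j X := by
  induction q using Quot.ind with
  | _ L =>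
    have h1 := odOfGerm_spec L
    exact cls_mem_mu h1.1 (by rw [← h1.2]; exact L.2.2)

lemma heightAt_eq (X : Set (Fin N → ℤ)) (j : ℕ) : heightAt X j = (mu j X).ncard := by
  rw [heightAt, ← Nat.card_coe_set_eq]
  refine Nat.card_congr (Equiv.ofBijective (fun q => ⟨germCls q, germCls_mem q⟩) ⟨?_, ?_⟩)
  · intro q q' hqq
    have hq : germCls q = germCls q' := congrArg Subtype.val hqq
    induction q using Quot.ind with
    | _ L =>
      induction q' using Quot.ind with
      | _ L' =>
        have h1 := odOfGerm_spec L
        have h2 := odOfGerm_spec L'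
        have hsc : SameCls (odOfGerm L) (odOfGerm L') := cls_eq_iff.mp hq
        apply Quot.sound
        show Commensurable L.1 L'.1
        rw [h1.2, h2.2]
        exact (commensurable_iff_sameCls h1.1 h2.1).mpr hsc
  · rintro ⟨c, ⟨o, rfl, hcard, hsub⟩⟩
    have hmem : o.set ∈ germSet X j := ⟨hcard ▸ orthant_of_OD o, hsub⟩
    refine ⟨Quot.mk _ ⟨o.set, hmem⟩, ?_⟩
    apply Subtype.ext
    show (odOfGerm ⟨o.set, hmem⟩).cls = o.cls
    have h1 := odOfGerm_spec (⟨o.set, hmem⟩ : germSet X j)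
    exact cls_eq_iff.mpr (sameCls_of_set_eq h1.2.symm)

end Stmt9Aux

namespace Stmt9Aux

open Finset

variable {N : ℕ}

def dirv (o : OD N) : Fin N → ℤ :=
  fun i => if i ∈ o.D then (if o.s i then 1 else -1) else 0

def OD.diag (o : OD N) (n : ℕ) : OD N :=
  ⟨fun i => o.p i + n * dirv o i, o.D, o.s⟩

lemma diag_sameCls (o : OD N) (n : ℕ) : SameCls o (o.diag n) :=
  ⟨rfl, fun _ _ => rfl, fun i hi => by simp [OD.diag, dirv, hi]⟩

lemma diag_p_mem (o : OD N) {i : Fin N} (n : ℕ) (hi : i ∈ o.D) :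
    (o.diag n).p i = o.p i + n * (if o.s i then 1 else -1) := by
  simp [OD.diag, dirv, hi]

lemma diag_p_notmem (o : OD N) {i : Fin N} (n : ℕ) (hi : i ∉ o.D) :
    (o.diag n).p i = o.p i := by
  simp [OD.diag, dirv, hi]

lemma diag_corner_mem (o : OD N) (n : ℕ) : (o.diag n).p ∈ o.set := by
  constructor
  · intro i hi
    rw [diag_p_mem o n hi]
    cases hs : o.s i <;> simp [cond, hs] <;> omega
  · intro i hi
    exact diag_p_notmem o n hi

lemma diag_subset (o : OD N) (n : ℕ) : (o.diag n).set ⊆ o.set :=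
  subset_of_sameCls_corner (diag_sameCls o n) (diag_corner_mem o n)

lemma diag_mono (o : OD N) {m n : ℕ} (h : m ≤ n) : (o.diag n).set ⊆ (o.diag m).set := by
  apply subset_of_sameCls_corner
  · exact ((diag_sameCls o m).symm.trans (diag_sameCls o n))
  · constructor
    · intro i hi
      show cond ((o.diag m).s i) ((o.diag m).p i) ((o.diag n).p i)
      rw [show (o.diag m).s i = o.s i from rfl, diag_p_mem o m hi, diag_p_mem o n hi]
      cases hs : o.s i <;> simp [cond, hs] <;> omega
    · intro i hi
      show (o.diag n).p i = (o.diag m).p i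
      rw [diag_p_notmem o n hi, diag_p_notmem o m hi]

/-- Compatibility of an orthant direction with a target orthant. -/
def compat (o o'' : OD N) : Prop :=
  (∀ i ∈ o.D, i ∈ o''.D ∧ o.s i = o''.s i) ∧
  (∀ i, i ∉ o.D → (i ∈ o''.D → cond (o''.s i) (o''.p i) (o.p i)) ∧
    (i ∉ o''.D → o.p i = o''.p i))

lemma compat_deep {o o'' : OD N} (h : compat o o'') :
    ∃ n₀ : ℕ, ∀ n, n₀ ≤ n → (o.diag n).set ⊆ o''.set := by
  refine ⟨o.D.sup (fun i => (o''.p i - o.p i).natAbs + (o.p i - o''.p i).natAbs),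
    fun n hn x hx => ?_⟩
  constructor
  · intro i hi
    by_cases hiD : i ∈ o.D
    · have hsup : (o''.p i - o.p i).natAbs + (o.p i - o''.p i).natAbs ≤ n :=
        le_trans (Finset.le_sup (f := fun i => (o''.p i - o.p i).natAbs +
          (o.p i - o''.p i).natAbs) hiD) hn
      have hxi := hx.1 i hiD
      rw [show (o.diag n).s i = o.s i from rfl, diag_p_mem o n hiD] at hxi
      rw [← (h.1 i hiD).2]
      cases hs : o.s i <;> rw [hs] at hxi <;> simp [cond] at hxi ⊢ <;> omega
    · have hxi := hx.2 i hiD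
      rw [diag_p_notmem o n hiD] at hxi
      rw [hxi]
      exact (h.2 i hiD).1 hi
  · intro i hi
    have hiD : i ∉ o.D := fun hiD => hi (h.1 i hiD).1
    have hxi := hx.2 i hiD
    rw [diag_p_notmem o n hiD] at hxi
    rw [hxi]
    exact (h.2 i hiD).2 hi

lemma incompat_avoid {o o'' : OD N} (h : ¬ compat o o'') :
    ∃ n₀ : ℕ, ∀ n, n₀ ≤ n → ∀ x ∈ (o.diag n).set, x ∉ o''.set := by
  by_cases h1 : ∀ i ∈ o.D, i ∈ o''.D ∧ o.s i = o''.s i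
  · have h2 : ∃ i, i ∉ o.D ∧ ((i ∈ o''.D ∧ ¬ cond (o''.s i) (o''.p i) (o.p i)) ∨
        (i ∉ o''.D ∧ o.p i ≠ o''.p i)) := by
      by_contra hc
      push_neg at hc
      exact h ⟨h1, fun i hi => hc i hi⟩
    obtain ⟨i, hi, hcase⟩ := h2
    refine ⟨0, fun n _ x hx hx'' => ?_⟩
    have hxi : x i = o.p i := by
      have h3 := hx.2 i hi
      rwa [diag_p_notmem o n hi] at h3
    rcases hcase with ⟨hiD, hcond⟩ | ⟨hiD, hne⟩
    · exact hcond (by rw [← hxi]; exact hx''.1 i hiD)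
    · exact hne (by rw [← hxi]; exact hx''.2 i hiD)
  · push_neg at h1
    obtain ⟨i, hiD, hbad⟩ := h1
    refine ⟨(o''.p i - o.p i).natAbs + (o.p i - o''.p i).natAbs + 1,
      fun n hn x hx hx'' => ?_⟩
    have hxi := hx.1 i hiD
    rw [show (o.diag n).s i = o.s i from rfl, diag_p_mem o n hiD] at hxi
    by_cases hiD'' : i ∈ o''.D
    · have hs : o.s i ≠ o''.s i := hbad hiD''
      have hxi'' := hx''.1 i hiD''
      cases hso : o.s i <;> cases hso'' : o''.s i <;> rw [hso] at hxi hs <;>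
        rw [hso''] at hxi'' hs
      · exact hs rfl
      · simp [cond] at hxi hxi''
        omega
      · simp [cond] at hxi hxi''
        omega
      · exact hs rfl
    · have hxi'' := hx''.2 i hiD''
      cases hso : o.s i <;> rw [hso] at hxi <;> simp [cond] at hxi <;> omega

lemma compat_of_unbounded {o o'' : OD N}
    (h : ∀ m : ℕ, ∃ n, m ≤ n ∧ (o.diag n).p ∈ o''.set) : compat o o'' := by
  by_contra hc
  obtain ⟨n₀, hn₀⟩ := incompat_avoid hc
  obtain ⟨n, hn, hmem⟩ := h n₀
  exact hn₀ n hn _ ((o.diag n).corner_mem) hmem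

lemma compat_deep_list {o : OD N} (l : List (OD N)) (h : ∀ o'' ∈ l, compat o o'') :
    ∃ n, ∀ o'' ∈ l, (o.diag n).set ⊆ o''.set := by
  induction l with
  | nil => exact ⟨0, by simp⟩
  | cons a t ih =>
    obtain ⟨n₁, hn₁⟩ := compat_deep (h a (by simp))
    obtain ⟨n₂, hn₂⟩ := ih (fun o'' ho'' => h o'' (by simp [ho'']))
    refine ⟨max n₁ n₂, fun o'' ho'' => ?_⟩
    rcases List.mem_cons.mp ho'' with rfl | ht
    · exact (diag_mono o (le_max_left n₁ n₂)).trans (hn₁ n₁ le_rfl)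
    · exact (diag_mono o (le_max_right n₁ n₂)).trans (hn₂ o'' ht)

/-- The set covered by a list of cells (each cell an intersection of orthants). -/
def cellsSet (cells : List (List (OD N))) : Set (Fin N → ℤ) :=
  {x | ∃ cell ∈ cells, ∀ o'' ∈ cell, x ∈ o''.set}

/-- Refinement: a rank-`j` orthant inside a union of cells has a same-class
suborthant inside a single cell. -/
lemma refine_into_cover {o : OD N} {cells : List (List (OD N))}
    (hcov : o.set ⊆ cellsSet cells) :
    ∃ cell ∈ cells, ∃ n : ℕ, ∀ o'' ∈ cell, (o.diag n).set ⊆ o''.set := by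
  classical
  have hchoice : ∀ m : ℕ, ∃ idx : Fin cells.length,
      ∀ o'' ∈ cells.get idx, (o.diag m).p ∈ o''.set := by
    intro m
    obtain ⟨cell, hcell, hmem⟩ := hcov (diag_corner_mem o m)
    obtain ⟨idx, hidx⟩ := List.get_of_mem hcell
    exact ⟨idx, by rw [hidx]; exact hmem⟩
  choose F hF using hchoice
  have : Nonempty (Fin cells.length) := ⟨F 0⟩
  obtain ⟨idx, hidx⟩ := Finite.exists_infinite_fiber F
  have hinf : (F ⁻¹' {idx}).Infinite := Set.infinite_coe_iff.mp hidx
  have hub : ∀ m : ℕ, ∃ n, m ≤ n ∧ F n = idx := by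
    intro m
    obtain ⟨n, hn1, hn2⟩ := hinf.exists_gt m
    exact ⟨n, le_of_lt hn2, hn1⟩
  refine ⟨cells.get idx, List.get_mem cells idx, ?_⟩
  have hcompat : ∀ o'' ∈ cells.get idx, compat o o'' := by
    intro o'' ho''
    apply compat_of_unbounded
    intro m
    obtain ⟨n, hn, hFn⟩ := hub m
    exact ⟨n, hn, by have := hF n o'' (hFn ▸ ho''); exact this⟩
  exact compat_deep_list _ hcompat

/-- Trimming: if no same-class suborthant of `o` lies inside a single cell,
then some deep suborthant avoids all the cells. -/
lemma trim_avoid {o : OD N} {cells : List (List (OD N))}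
    (hno : ∀ (o' : OD N), SameCls o o' → o'.set ⊆ o.set →
      ∀ cell ∈ cells, ∃ o'' ∈ cell, ¬ o'.set ⊆ o''.set) :
    ∃ n : ℕ, ∀ x ∈ (o.diag n).set, x ∉ cellsSet cells := by
  classical
  have hcell : ∀ cell ∈ cells, ∃ o'' ∈ cell, ¬ compat o o'' := by
    intro cell hcellmem
    by_contra hc
    push_neg at hc
    obtain ⟨n, hn⟩ := compat_deep_list cell hc
    obtain ⟨o'', ho''1, ho''2⟩ := hno (o.diag n) (diag_sameCls o n) (diag_subset o n)
      cell hcellmem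
    exact ho''2 (hn o'' ho''1)
  -- accumulate avoidance thresholds over cells
  suffices hsuff : ∀ (cl : List (List (OD N))), (∀ cell ∈ cl, ∃ o'' ∈ cell, ¬ compat o o'') →
      ∃ n : ℕ, ∀ x ∈ (o.diag n).set, ∀ cell ∈ cl, ∃ o'' ∈ cell, x ∉ o''.set by
    obtain ⟨n, hn⟩ := hsuff cells hcell
    refine ⟨n, fun x hx hxc => ?_⟩
    obtain ⟨cell, hc1, hc2⟩ := hxc
    obtain ⟨o'', ho''1, ho''2⟩ := hn x hx cell hc1
    exact ho''2 (hc2 o'' ho''1)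
  intro cl
  induction cl with
  | nil => exact fun _ => ⟨0, by simp⟩
  | cons a t ih =>
    intro hcl
    obtain ⟨o'', ho''1, ho''2⟩ := hcl a (by simp)
    obtain ⟨n₁, hn₁⟩ := incompat_avoid ho''2
    obtain ⟨n₂, hn₂⟩ := ih (fun cell hc => hcl cell (by simp [hc]))
    refine ⟨max n₁ n₂, fun x hx cell hc => ?_⟩
    rcases List.mem_cons.mp hc with rfl | ht
    · exact ⟨o'', ho''1, hn₁ (max n₁ n₂) (le_max_left _ _) x hx⟩
    · exact hn₂ x (diag_mono o (le_max_right n₁ n₂) hx) cell ht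

end Stmt9Aux

namespace Stmt9Aux

open Finset

variable {N : ℕ}

lemma exists_image_OD (a : Fin N → ℤ) {A : Matrix (Fin N) (Fin N) ℤ} (hA : IsOrthMat A)
    (o : OD N) :
    ∃ o' : OD N, o'.D.card = o.D.card ∧ (fun x => a + A.mulVec x) '' o.set = o'.set := by
  obtain ⟨o', h1, h2⟩ := exists_OD_of_orthant (isOrthantOfRank_affine_image a hA
    (orthant_of_OD o))
  exact ⟨o', h1, h2⟩

/-- Piecewise data for a pei map with identity off `S`. -/
structure PeiData (N : ℕ) (f : (Fin N → ℤ) → (Fin N → ℤ)) (S : Set (Fin N → ℤ)) : Type where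
  pieces : List (OD N × ((Fin N → ℤ) × Matrix (Fin N) (Fin N) ℤ))
  hiso : ∀ pc ∈ pieces, IsOrthMat pc.2.2 ∧ ∀ x ∈ pc.1.set, f x = pc.2.1 + pc.2.2.mulVec x
  hcov : S = {x | ∃ pc ∈ pieces, x ∈ pc.1.set}
  hoff : ∀ x ∉ S, f x = x

lemma image_eq_self_of_off_id {α : Type*} {g : Equiv.Perm α} {S : Set α}
    (hoff : ∀ x ∉ S, g x = x) : ⇑g '' S = S := by
  apply Set.Subset.antisymm
  · rintro _ ⟨x, hx, rfl⟩
    by_contra hgx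
    have h1 := hoff _ hgx
    have h2 : x = g x := g.injective h1.symm
    exact hgx (h2 ▸ hx)
  · intro x hx
    refine ⟨g.symm x, ?_, g.apply_symm_apply x⟩
    by_contra hy
    have h1 := hoff _ hy
    rw [g.apply_symm_apply] at h1
    exact hy (h1 ▸ hx)

lemma peiData_of {S : Set (Fin N → ℤ)} {g : Equiv.Perm (Fin N → ℤ)}
    (hg : IsPeiPerm S g) : Nonempty (PeiData N ⇑g S) := by
  classical
  obtain ⟨⟨𝓛, hfin, horth, hScov, hdisj, hisoL⟩, hoff⟩ := hg
  have hdata : ∀ P : {P // P ∈ hfin.toFinset}, ∃ pc : OD N ×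
      ((Fin N → ℤ) × Matrix (Fin N) (Fin N) ℤ),
      P.1 = pc.1.set ∧ IsOrthMat pc.2.2 ∧ ∀ x ∈ pc.1.set, g x = pc.2.1 + pc.2.2.mulVec x := by
    rintro ⟨P, hP⟩
    rw [Set.Finite.mem_toFinset] at hP
    obtain ⟨r, hr⟩ := horth P hP
    obtain ⟨o, _, hPo⟩ := exists_OD_of_orthant hr
    obtain ⟨a, A, hA, hiso'⟩ := hisoL P hP
    exact ⟨⟨o, a, A⟩, hPo, hA, fun x hx => hiso' x (hPo ▸ hx)⟩
  choose dataF hdata1 hdata2 hdata3 using hdata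
  refine ⟨⟨hfin.toFinset.attach.toList.map dataF, ?_, ?_, hoff⟩⟩
  · intro pc hpc
    obtain ⟨P, _, rfl⟩ := List.mem_map.mp hpc
    exact ⟨hdata2 _, hdata3 _⟩
  · rw [hScov]
    ext x
    simp only [Set.mem_setOf_eq, Set.mem_sUnion]
    constructor
    · rintro ⟨P, hP, hx⟩
      have hP' : P ∈ hfin.toFinset := hfin.mem_toFinset.mpr hP
      refine ⟨dataF ⟨P, hP'⟩, List.mem_map.mpr ⟨⟨P, hP'⟩,
        Finset.mem_toList.mpr (Finset.mem_attach _ _), rfl⟩, ?_⟩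
      rw [← hdata1 ⟨P, hP'⟩]
      exact hx
    · rintro ⟨pc, hmem, hx⟩
      obtain ⟨⟨P, hP⟩, _, rfl⟩ := List.mem_map.mp hmem
      refine ⟨P, hfin.mem_toFinset.mp hP, ?_⟩
      have heq : P = (dataF ⟨P, hP⟩).1.set := hdata1 ⟨P, hP⟩
      rw [heq]
      exact hx

lemma peiData_symm {S : Set (Fin N → ℤ)} {g : Equiv.Perm (Fin N → ℤ)}
    (pd : PeiData N ⇑g S) (hoffg : ∀ x ∉ S, g x = x) : Nonempty (PeiData N ⇑g.symm S) := by
  classical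
  have hdata : ∀ pc : {pc // pc ∈ pd.pieces}, ∃ pc' : OD N ×
      ((Fin N → ℤ) × Matrix (Fin N) (Fin N) ℤ),
      pc'.1.set = ⇑g '' pc.1.1.set ∧ IsOrthMat pc'.2.2 ∧
      ∀ y ∈ pc'.1.set, g.symm y = pc'.2.1 + pc'.2.2.mulVec y := by
    rintro ⟨pc, hpc⟩
    obtain ⟨hA, hiso⟩ := pd.hiso pc hpc
    obtain ⟨o', _, himg⟩ := exists_image_OD pc.2.1 hA pc.1
    have himg' : ⇑g '' pc.1.set = o'.set := by
      rw [← himg]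
      exact Set.image_congr hiso
    refine ⟨⟨o', -(pc.2.2.transpose.mulVec pc.2.1), pc.2.2.transpose⟩, himg'.symm,
      isOrthMat_transpose hA, ?_⟩
    rintro y hy
    rw [← himg'] at hy
    obtain ⟨x, hx, rfl⟩ := hy
    show g.symm (g x) = _
    rw [g.symm_apply_apply, hiso x hx]
    exact (affine_left_inverse hA pc.2.1 x).symm
  choose dataF hdata1 hdata2 hdata3 using hdata
  refine ⟨⟨pd.pieces.attach.map dataF, ?_, ?_, ?_⟩⟩
  · intro pc' hpc'
    obtain ⟨pc, _, rfl⟩ := List.mem_map.mp hpc'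
    exact ⟨hdata2 _, hdata3 _⟩
  · have hS : ⇑g '' S = S := image_eq_self_of_off_id hoffg
    conv_lhs => rw [← hS, pd.hcov]
    ext y
    simp only [Set.mem_setOf_eq, Set.mem_image]
    constructor
    · rintro ⟨x, ⟨pc, hpc, hx⟩, rfl⟩
      refine ⟨dataF ⟨pc, hpc⟩, List.mem_map.mpr ⟨⟨pc, hpc⟩, List.mem_attach _ _, rfl⟩, ?_⟩
      rw [hdata1 ⟨pc, hpc⟩]
      exact ⟨x, hx, rfl⟩
    · rintro ⟨pc', hmem, hy⟩
      obtain ⟨⟨pc, hpc⟩, _, rfl⟩ := List.mem_map.mp hmem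
      rw [hdata1 ⟨pc, hpc⟩] at hy
      obtain ⟨x, hx, rfl⟩ := hy
      exact ⟨x, ⟨pc, hpc, hx⟩, rfl⟩
  · intro x hx
    have h1 := hoffg x hx
    conv_lhs => rw [← h1]
    exact g.symm_apply_apply x

end Stmt9Aux

namespace Stmt9Aux

open Finset

variable {N : ℕ} {S : Set (Fin N → ℤ)} {f : (Fin N → ℤ) → (Fin N → ℤ)}

/-- Every orthant has a same-class suborthant on which `f` is affine-isometric. -/
lemma exists_goodRep (pd : PeiData N f S) (o : OD N) :
    ∃ q : OD N × OD N, SameCls o q.1 ∧ q.1.set ⊆ o.set ∧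
      f '' q.1.set = q.2.set ∧ q.2.D.card = q.1.D.card ∧
      ∃ a A, IsOrthMat A ∧ ∀ x ∈ q.1.set, f x = a + A.mulVec x := by
  classical
  have main : ∃ o' : OD N, SameCls o o' ∧ o'.set ⊆ o.set ∧
      ∃ a A, IsOrthMat A ∧ ∀ x ∈ o'.set, f x = a + A.mulVec x := by
    by_cases hcase : ∃ pc ∈ pd.pieces, ∃ o' : OD N, SameCls o o' ∧ o'.set ⊆ o.set ∧
        o'.set ⊆ pc.1.set
    · obtain ⟨pc, hpc, o', h1, h2, h3⟩ := hcase
      exact ⟨o', h1, h2, pc.2.1, pc.2.2, (pd.hiso pc hpc).1,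
        fun x hx => (pd.hiso pc hpc).2 x (h3 hx)⟩
    · push_neg at hcase
      have hno : ∀ (o' : OD N), SameCls o o' → o'.set ⊆ o.set →
          ∀ cell ∈ pd.pieces.map (fun pc => [pc.1]), ∃ o'' ∈ cell, ¬ o'.set ⊆ o''.set := by
        intro o' h1 h2 cell hcell
        obtain ⟨pc, hpc, rfl⟩ := List.mem_map.mp hcell
        exact ⟨pc.1, by simp, fun hsub => hcase pc hpc o' h1 h2 hsub⟩
      obtain ⟨n, hn⟩ := trim_avoid hno
      refine ⟨o.diag n, diag_sameCls o n, diag_subset o n, 0, 1, ?_, fun x hx => ?_⟩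
      · show (1 : Matrix (Fin N) (Fin N) ℤ) * (1 : Matrix (Fin N) (Fin N) ℤ).transpose = 1
        simp
      · have hxS : x ∉ S := by
          intro hxS
          rw [pd.hcov] at hxS
          obtain ⟨pc, hpc, hxp⟩ := hxS
          exact hn x hx ⟨[pc.1], List.mem_map.mpr ⟨pc, hpc, rfl⟩, by simpa using hxp⟩
        rw [pd.hoff x hxS, Matrix.one_mulVec]
        simp
  obtain ⟨o', h1, h2, a, A, hA, hiso⟩ := main
  obtain ⟨o₂, hc, himg⟩ := exists_image_OD a hA o'
  refine ⟨⟨o', o₂⟩, h1, h2, ?_, hc, a, A, hA, hiso⟩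
  rw [← himg]
  exact Set.image_congr hiso

/-- The class map induced by `f`. -/
noncomputable def classMap (pd : PeiData N f S) (c : OD N) : OD N :=
  (Classical.choose (exists_goodRep pd c)).2.cls

/-- The image class does not depend on the chosen good representative. -/
lemma imageCls_unique {c : OD N} {o₁ o₂ q₁ q₂ : OD N}
    (h1 : SameCls c o₁) (h2 : SameCls c o₂)
    (hiso1 : ∃ a A, IsOrthMat A ∧ ∀ x ∈ o₁.set, f x = a + A.mulVec x)
    (himg1 : f '' o₁.set = q₁.set) (hc1 : q₁.D.card = o₁.D.card)
    (himg2 : f '' o₂.set = q₂.set) (hc2 : q₂.D.card = o₂.D.card) :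
    q₁.cls = q₂.cls := by
  obtain ⟨a, A, hA, hiso⟩ := hiso1
  have h12 : SameCls o₁ o₂ := h1.symm.trans h2
  set o₃ := interOD o₁ o₂ with ho₃
  have ho₃set : o₃.set = o₁.set ∩ o₂.set := interOD_set h12
  have ho₃1 : o₃.set ⊆ o₁.set := by rw [ho₃set]; exact Set.inter_subset_left
  have ho₃2 : o₃.set ⊆ o₂.set := by rw [ho₃set]; exact Set.inter_subset_right
  obtain ⟨q₃, hq₃c, hq₃⟩ := exists_image_OD a hA o₃
  have himg3 : f '' o₃.set = q₃.set := by
    rw [← hq₃]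
    exact Set.image_congr (fun x hx => hiso x (ho₃1 hx))
  have hsub1 : q₃.set ⊆ q₁.set := by
    rw [← himg3, ← himg1]
    exact Set.image_mono ho₃1
  have hsub2 : q₃.set ⊆ q₂.set := by
    rw [← himg3, ← himg2]
    exact Set.image_mono ho₃2
  have hcards : o₃.D.card = o₁.D.card := rfl
  have hs1 : SameCls q₃ q₁ := sameCls_of_subset_card hsub1 (by
    rw [hq₃c, hcards, hc1])
  have hs2 : SameCls q₃ q₂ := sameCls_of_subset_card hsub2 (by
    rw [hq₃c, hcards, hc2, h12.card_eq])
  rw [← cls_eq_iff.mpr hs1, cls_eq_iff.mpr hs2]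

lemma classMap_spec (pd : PeiData N f S) {c o₁ q₁ : OD N} (h1 : SameCls c o₁)
    (hiso : ∃ a A, IsOrthMat A ∧ ∀ x ∈ o₁.set, f x = a + A.mulVec x)
    (himg : f '' o₁.set = q₁.set) (hcard : q₁.D.card = o₁.D.card) :
    classMap pd c = q₁.cls := by
  have hspec := Classical.choose_spec (exists_goodRep pd c)
  obtain ⟨hs1, _, himg', hcard', hiso'⟩ := hspec
  exact imageCls_unique hs1 h1 hiso' himg' hcard' himg hcard

lemma classMap_mem_mu (pd : PeiData N f S) {j : ℕ} {X : Set (Fin N → ℤ)} {c : OD N}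
    (hc : c ∈ mu j X) : classMap pd c ∈ mu j (f '' X) := by
  obtain ⟨o, ho, hcard, hsub⟩ := hc
  obtain ⟨⟨o', q⟩, h1, h2, himg, hcards, hiso⟩ := exists_goodRep pd o
  have hco : SameCls c o := by
    rw [← ho]
    exact (sameCls_cls_self o).symm
  have hspec : classMap pd c = q.cls := classMap_spec pd (hco.trans h1) hiso himg hcards
  rw [hspec]
  apply cls_mem_mu
  · rw [hcards, ← h1.card_eq, hcard]
  · rw [← himg]
    exact Set.image_mono (h2.trans hsub)

/-- Roundtrip: composing the class maps of a map and a (pointwise) left inverse. -/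
lemma classMap_roundtrip {f' : (Fin N → ℤ) → (Fin N → ℤ)} {S' : Set (Fin N → ℤ)}
    (pd : PeiData N f S) (pd' : PeiData N f' S')
    (hinv : ∀ x, f' (f x) = x) {c : OD N} (hnorm : c.cls = c) :
    classMap pd' (classMap pd c) = c := by
  have hspec := Classical.choose_spec (exists_goodRep pd c)
  set ch := Classical.choose (exists_goodRep pd c) with hch
  obtain ⟨hs1, hsub1, himg1, hcard1, a, A, hA, hiso1⟩ := hspec
  have hcM : classMap pd c = ch.2.cls := rfl
  rw [hcM]
  -- f' is affine on ch.2.set, with image ch.1.set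
  have hiso' : ∀ y ∈ ch.2.set, f' y = -(A.transpose.mulVec a) + A.transpose.mulVec y := by
    intro y hy
    rw [← himg1] at hy
    obtain ⟨x, hx, rfl⟩ := hy
    rw [hinv x, hiso1 x hx]
    exact (affine_left_inverse hA a x).symm
  have himg' : f' '' ch.2.set = ch.1.set := by
    rw [← himg1, ← Set.image_comp]
    have : f' ∘ f = id := funext hinv
    rw [this, Set.image_id]
  have hres := classMap_spec pd' (c := ch.2.cls) (o₁ := ch.2) (q₁ := ch.1)
    (sameCls_cls_self ch.2).symm
    ⟨-(A.transpose.mulVec a), A.transpose, isOrthMat_transpose hA, hiso'⟩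
    himg' hcard1.symm
  rw [hres, cls_eq_iff.mpr hs1.symm, hnorm]

end Stmt9Aux

namespace Stmt9Aux

open Finset

variable {N : ℕ}

instance (b : Bool) (v z : ℤ) : Decidable (cond b v z) :=
  if hb : b = true then decidable_of_iff (v ≤ z) (by simp [cond, hb])
  else decidable_of_iff (z ≤ v) (by simp [cond, hb])

def atomSet (a : ℤ × Option Bool) : Set ℤ :=
  match a.2 with
  | none => {a.1}
  | some b => {z | cond b a.1 z}

def ocond (o : OD N) (i : Fin N) : ℤ × Option Bool :=
  (o.p i, if i ∈ o.D then some (o.s i) else none)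

lemma mem_set_iff_atoms {o : OD N} {x : Fin N → ℤ} :
    x ∈ o.set ↔ ∀ i, x i ∈ atomSet (ocond o i) := by
  constructor
  · rintro ⟨h1, h2⟩ i
    by_cases hi : i ∈ o.D
    · simpa [atomSet, ocond, hi] using h1 i hi
    · simpa [atomSet, ocond, hi] using h2 i hi
  · intro h
    constructor
    · intro i hi
      have := h i
      simpa [atomSet, ocond, hi] using this
    · intro i hi
      have := h i
      simpa [atomSet, ocond, hi] using this

noncomputable def interAtoms (a b : ℤ × Option Bool) : Finset (ℤ × Option Bool) :=
  match a.2, b.2 with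
  | none, none => if a.1 = b.1 then {(a.1, none)} else ∅
  | none, some sb => if cond sb b.1 a.1 then {(a.1, none)} else ∅
  | some sa, none => if cond sa a.1 b.1 then {(b.1, none)} else ∅
  | some sa, some sb =>
    if sa = sb then {(if sa then max a.1 b.1 else min a.1 b.1, some sa)}
    else (if sa then Finset.Icc a.1 b.1 else Finset.Icc b.1 a.1).image (fun z => (z, none))

lemma mem_atomSet_none {v z : ℤ} : z ∈ atomSet (v, none) ↔ z = v := by
  simp [atomSet]

lemma mem_atomSet_some {v z : ℤ} {b : Bool} : z ∈ atomSet (v, some b) ↔ cond b v z :=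
  Iff.rfl

lemma mem_interAtoms_iff (a b : ℤ × Option Bool) (z : ℤ) :
    (∃ c ∈ interAtoms a b, z ∈ atomSet c) ↔ z ∈ atomSet a ∧ z ∈ atomSet b := by
  obtain ⟨a1, a2⟩ := a
  obtain ⟨b1, b2⟩ := b
  match a2, b2 with
  | none, none =>
    by_cases h : a1 = b1
    · subst h
      simp only [interAtoms, if_pos rfl]
      constructor
      · rintro ⟨c, hc, hz⟩
        rw [if_true, Finset.mem_singleton] at hc
        subst hc
        exact ⟨hz, hz⟩
      · rintro ⟨h1, _⟩
        exact ⟨(a1, none), by rw [if_true]; exact Finset.mem_singleton_self _, h1⟩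
    · simp only [interAtoms, if_neg h]
      constructor
      · rintro ⟨c, hc, _⟩
        exact absurd hc (Finset.notMem_empty c)
      · rintro ⟨h1, h2⟩
        rw [mem_atomSet_none] at h1 h2
        exact absurd (h1 ▸ h2) h
  | none, some sb =>
    by_cases h : cond sb b1 a1
    · simp only [interAtoms, if_pos h]
      constructor
      · rintro ⟨c, hc, hz⟩
        rw [Finset.mem_singleton] at hc
        subst hc
        rw [mem_atomSet_none] at hz
        subst hz
        exact ⟨rfl, h⟩
      · rintro ⟨h1, _⟩
        exact ⟨(a1, none), Finset.mem_singleton_self _, h1⟩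
    · simp only [interAtoms, if_neg h]
      constructor
      · rintro ⟨c, hc, _⟩
        exact absurd hc (Finset.notMem_empty c)
      · rintro ⟨h1, h2⟩
        rw [mem_atomSet_none] at h1
        rw [mem_atomSet_some] at h2
        subst h1
        exact absurd h2 h
  | some sa, none =>
    by_cases h : cond sa a1 b1
    · simp only [interAtoms, if_pos h]
      constructor
      · rintro ⟨c, hc, hz⟩
        rw [Finset.mem_singleton] at hc
        subst hc
        rw [mem_atomSet_none] at hz
        subst hz
        exact ⟨h, rfl⟩
      · rintro ⟨_, h2⟩
        exact ⟨(b1, none), Finset.mem_singleton_self _, h2⟩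
    · simp only [interAtoms, if_neg h]
      constructor
      · rintro ⟨c, hc, _⟩
        exact absurd hc (Finset.notMem_empty c)
      · rintro ⟨h1, h2⟩
        rw [mem_atomSet_some] at h1
        rw [mem_atomSet_none] at h2
        subst h2
        exact absurd h1 h
  | some sa, some sb =>
    by_cases h : sa = sb
    · subst h
      simp only [interAtoms, if_pos rfl]
      constructor
      · rintro ⟨c, hc, hz⟩
        rw [if_true, Finset.mem_singleton] at hc
        subst hc
        rw [mem_atomSet_some] at hz
        rw [mem_atomSet_some, mem_atomSet_some]
        cases sa <;> (simp [cond] at hz ⊢) <;> omega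
      · rintro ⟨h1, h2⟩
        refine ⟨(if sa then max a1 b1 else min a1 b1, some sa),
          by rw [if_true]; exact Finset.mem_singleton_self _, ?_⟩
        rw [mem_atomSet_some] at h1 h2 ⊢
        cases sa <;> (simp [cond] at h1 h2 ⊢) <;> omega
    · simp only [interAtoms, if_neg h]
      constructor
      · rintro ⟨c, hc, hz⟩
        rw [Finset.mem_image] at hc
        obtain ⟨w, hw, rfl⟩ := hc
        rw [mem_atomSet_none] at hz
        subst hz
        rw [mem_atomSet_some, mem_atomSet_some]
        cases sa <;> cases sb <;> first
          | exact absurd rfl h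
          | ((simp [cond] at hw ⊢) <;> omega)
      · rintro ⟨h1, h2⟩
        rw [mem_atomSet_some] at h1 h2
        refine ⟨(z, none), ?_, rfl⟩
        rw [Finset.mem_image]
        refine ⟨z, ?_, rfl⟩
        cases sa <;> cases sb <;> first
          | exact absurd rfl h
          | ((simp [cond] at h1 h2 ⊢) <;> omega)

def atomsOD (φ : Fin N → ℤ × Option Bool) : OD N :=
  ⟨fun i => (φ i).1, univ.filter (fun i => (φ i).2.isSome), fun i => ((φ i).2.getD false)⟩

lemma mem_atomsOD_iff {φ : Fin N → ℤ × Option Bool} {x : Fin N → ℤ} :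
    x ∈ (atomsOD φ).set ↔ ∀ i, x i ∈ atomSet (φ i) := by
  constructor
  · rintro ⟨h1, h2⟩ i
    rcases hφ : (φ i).2 with _ | b
    · have hi : i ∉ (atomsOD φ).D := by simp [atomsOD, hφ]
      have := h2 i hi
      simp only [atomsOD] at this
      simp [atomSet, hφ, this]
    · have hi : i ∈ (atomsOD φ).D := by simp [atomsOD, hφ]
      have := h1 i hi
      simp only [atomsOD] at this
      rw [hφ] at this
      simpa [atomSet, hφ] using this
  · intro h
    constructor
    · intro i hi
      simp only [atomsOD, mem_filter, mem_univ, true_and] at hi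
      rcases hφ : (φ i).2 with _ | b
      · rw [hφ] at hi
        simp at hi
      · have := h i
        rw [atomSet, hφ] at this
        show cond ((atomsOD φ).s i) ((atomsOD φ).p i) (x i)
        simp only [atomsOD]
        rw [hφ]
        simpa using this
    · intro i hi
      simp only [atomsOD, mem_filter, mem_univ, true_and] at hi
      rcases hφ : (φ i).2 with _ | b
      · have := h i
        rw [atomSet, hφ] at this
        show x i = (atomsOD φ).p i
        simpa [atomsOD] using this
      · rw [hφ] at hi
        simp at hi

lemma inter_decomp (o1 o2 : OD N) :
    ∃ pieces : List (OD N), (∀ o ∈ pieces, o.set ⊆ o1.set ∩ o2.set) ∧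
      o1.set ∩ o2.set = {x | ∃ o ∈ pieces, x ∈ o.set} := by
  classical
  refine ⟨((Fintype.piFinset (fun i => interAtoms (ocond o1 i) (ocond o2 i))).toList).map
    atomsOD, ?_, ?_⟩
  · intro o ho
    obtain ⟨φ, hφ, rfl⟩ := List.mem_map.mp ho
    rw [Finset.mem_toList, Fintype.mem_piFinset] at hφ
    intro x hx
    rw [mem_atomsOD_iff] at hx
    constructor <;> rw [mem_set_iff_atoms] <;> intro i
    · exact ((mem_interAtoms_iff _ _ _).mp ⟨φ i, hφ i, hx i⟩).1
    · exact ((mem_interAtoms_iff _ _ _).mp ⟨φ i, hφ i, hx i⟩).2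
  · ext x
    simp only [Set.mem_inter_iff, Set.mem_setOf_eq]
    constructor
    · rintro ⟨hx1, hx2⟩
      rw [mem_set_iff_atoms] at hx1 hx2
      have hch : ∀ i, ∃ c ∈ interAtoms (ocond o1 i) (ocond o2 i), x i ∈ atomSet c :=
        fun i => (mem_interAtoms_iff _ _ _).mpr ⟨hx1 i, hx2 i⟩
      choose φ hφ1 hφ2 using hch
      refine ⟨atomsOD φ, List.mem_map.mpr ⟨φ, ?_, rfl⟩, mem_atomsOD_iff.mpr hφ2⟩
      rw [Finset.mem_toList, Fintype.mem_piFinset]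
      exact hφ1
    · rintro ⟨o, ho, hx⟩
      obtain ⟨φ, hφ, rfl⟩ := List.mem_map.mp ho
      rw [Finset.mem_toList, Fintype.mem_piFinset] at hφ
      rw [mem_atomsOD_iff] at hx
      constructor <;> rw [mem_set_iff_atoms] <;> intro i
      · exact ((mem_interAtoms_iff _ _ _).mp ⟨φ i, hφ i, hx i⟩).1
      · exact ((mem_interAtoms_iff _ _ _).mp ⟨φ i, hφ i, hx i⟩).2

lemma orthohedral_OD_list {X : Set (Fin N → ℤ)} (hX : IsOrthohedral X) :
    ∃ l : List (OD N), X = {x | ∃ o ∈ l, x ∈ o.set} := by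
  classical
  obtain ⟨𝓛, hfin, horth, hXcov⟩ := hX
  have hdata : ∀ P : {P // P ∈ hfin.toFinset}, ∃ o : OD N, P.1 = o.set := by
    rintro ⟨P, hP⟩
    rw [Set.Finite.mem_toFinset] at hP
    obtain ⟨r, hr⟩ := horth P hP
    obtain ⟨o, _, hPo⟩ := exists_OD_of_orthant hr
    exact ⟨o, hPo⟩
  choose dataF hdata1 using hdata
  refine ⟨hfin.toFinset.attach.toList.map dataF, ?_⟩
  rw [hXcov]
  ext x
  simp only [Set.mem_setOf_eq, Set.mem_sUnion]
  constructor
  · rintro ⟨P, hP, hx⟩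
    have hP' : P ∈ hfin.toFinset := hfin.mem_toFinset.mpr hP
    refine ⟨dataF ⟨P, hP'⟩, List.mem_map.mpr ⟨⟨P, hP'⟩,
      Finset.mem_toList.mpr (Finset.mem_attach _ _), rfl⟩, ?_⟩
    have heq : P = (dataF ⟨P, hP'⟩).set := hdata1 ⟨P, hP'⟩
    rw [← heq]
    exact hx
  · rintro ⟨o, hmem, hx⟩
    obtain ⟨⟨P, hP⟩, _, rfl⟩ := List.mem_map.mp hmem
    refine ⟨P, hfin.mem_toFinset.mp hP, ?_⟩
    have heq : P = (dataF ⟨P, hP⟩).set := hdata1 ⟨P, hP⟩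
    rw [heq]
    exact hx

lemma inter_orthohedral_list {T S : Set (Fin N → ℤ)} (hT : IsOrthohedral T)
    (hS : IsOrthohedral S) :
    ∃ l : List (OD N), (∀ o ∈ l, o.set ⊆ T ∩ S) ∧ T ∩ S = {x | ∃ o ∈ l, x ∈ o.set} := by
  classical
  obtain ⟨lT, hlT⟩ := orthohedral_OD_list hT
  obtain ⟨lS, hlS⟩ := orthohedral_OD_list hS
  have hpair : ∀ pq : OD N × OD N, ∃ pieces : List (OD N),
      (∀ o ∈ pieces, o.set ⊆ pq.1.set ∩ pq.2.set) ∧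
      pq.1.set ∩ pq.2.set = {x | ∃ o ∈ pieces, x ∈ o.set} :=
    fun pq => inter_decomp pq.1 pq.2
  choose decompF hdec1 hdec2 using hpair
  refine ⟨(lT.product lS).flatMap decompF, ?_, ?_⟩
  · intro o ho
    rw [List.mem_flatMap] at ho
    obtain ⟨pq, hpq, ho⟩ := ho
    rw [List.pair_mem_product] at hpq
    intro x hx
    have := hdec1 pq o ho hx
    constructor
    · rw [hlT]
      exact ⟨pq.1, hpq.1, this.1⟩
    · rw [hlS]
      exact ⟨pq.2, hpq.2, this.2⟩
  · ext x
    simp only [Set.mem_setOf_eq]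
    constructor
    · rintro ⟨hxT, hxS⟩
      rw [hlT] at hxT
      rw [hlS] at hxS
      obtain ⟨o1, ho1, hx1⟩ := hxT
      obtain ⟨o2, ho2, hx2⟩ := hxS
      have hmem : x ∈ (o1, o2).1.set ∩ (o1, o2).2.set := ⟨hx1, hx2⟩
      rw [hdec2 (o1, o2)] at hmem
      obtain ⟨o, ho, hx⟩ := hmem
      refine ⟨o, List.mem_flatMap.mpr ⟨(o1, o2), ?_, ho⟩, hx⟩
      rw [List.pair_mem_product]
      exact ⟨ho1, ho2⟩
    · rintro ⟨o, ho, hx⟩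
      rw [List.mem_flatMap] at ho
      obtain ⟨pq, hpq, ho⟩ := ho
      rw [List.pair_mem_product] at hpq
      have := hdec1 pq o ho hx
      constructor
      · rw [hlT]
        exact ⟨pq.1, hpq.1, this.1⟩
      · rw [hlS]
        exact ⟨pq.2, hpq.2, this.2⟩

end Stmt9Aux

namespace Stmt9Aux

open Finset

variable {N : ℕ}

lemma cellsSet_singletons (l : List (OD N)) :
    cellsSet (l.map fun o => [o]) = {x | ∃ o ∈ l, x ∈ o.set} := by
  ext x
  constructor
  · rintro ⟨cell, hcell, hall⟩
    obtain ⟨o, ho, rfl⟩ := List.mem_map.mp hcell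
    exact ⟨o, ho, hall o (by simp)⟩
  · rintro ⟨o, ho, hx⟩
    refine ⟨[o], List.mem_map.mpr ⟨o, ho, rfl⟩, ?_⟩
    intro o'' h
    rw [List.mem_singleton] at h
    subst h
    exact hx

lemma mu_subset_union_list {j : ℕ} {l : List (OD N)} {X : Set (Fin N → ℤ)}
    (hX : X ⊆ {x | ∃ o ∈ l, x ∈ o.set}) :
    mu j X ⊆ {c | ∃ o ∈ l, c ∈ mu j o.set} := by
  rintro c ⟨oM, rfl, hcard, hsub⟩
  have hcov : oM.set ⊆ cellsSet (l.map fun o => [o]) := by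
    rw [cellsSet_singletons]
    exact hsub.trans hX
  obtain ⟨cell, hcell, n, hn⟩ := refine_into_cover hcov
  obtain ⟨o, ho, rfl⟩ := List.mem_map.mp hcell
  refine ⟨o, ho, ?_⟩
  have hsub' := hn o (by simp)
  have hcl : (oM.diag n).cls = oM.cls := cls_eq_iff.mpr (diag_sameCls oM n).symm
  rw [← hcl]
  exact cls_mem_mu (by rw [show (oM.diag n).D = oM.D from rfl, hcard]) hsub'

lemma mu_empty_of_card_lt {j : ℕ} {o : OD N} (h : o.D.card < j) : mu j o.set = ∅ := by
  ext c
  simp only [Set.mem_empty_iff_false, iff_false]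
  rintro ⟨oM, rfl, hcard, hsub⟩
  have := Finset.card_le_card (subset_structure hsub).1
  omega

lemma mu_eq_singleton_of_card_eq {j : ℕ} {o : OD N} (h : o.D.card = j) :
    mu j o.set = {o.cls} := by
  ext c
  simp only [Set.mem_singleton_iff]
  constructor
  · rintro ⟨oM, rfl, hcard, hsub⟩
    exact cls_eq_iff.mpr (sameCls_of_subset_card hsub (by rw [hcard, h]))
  · rintro rfl
    exact cls_mem_mu h subset_rfl

lemma mu_diff_orthant {j : ℕ} {X : Set (Fin N → ℤ)} (oB : OD N) :
    mu j (X \ oB.set) = mu j X \ mu j oB.set := by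
  ext c
  constructor
  · rintro ⟨oM, rfl, hcard, hsub⟩
    refine ⟨⟨oM, rfl, hcard, hsub.trans Set.diff_subset⟩, ?_⟩
    rintro ⟨oM', hcls, hcard', hsub'⟩
    have hsc : SameCls oM' oM := cls_eq_iff.mp hcls
    obtain ⟨x, hx', hx⟩ := sameCls_inter_nonempty hsc
    exact (hsub hx).2 (hsub' hx')
  · rintro ⟨⟨oM, rfl, hcard, hsub⟩, hnot⟩
    have hno : ∀ (o' : OD N), SameCls oM o' → o'.set ⊆ oM.set →
        ∀ cell ∈ [[oB]], ∃ o'' ∈ cell, ¬ o'.set ⊆ o''.set := by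
      intro o' h1 h2 cell hcell
      rw [List.mem_singleton] at hcell
      subst hcell
      refine ⟨oB, by simp, fun hsub'' => hnot ⟨o', ?_, ?_, hsub''⟩⟩
      · exact cls_eq_iff.mpr h1.symm
      · rw [← h1.card_eq, hcard]
    obtain ⟨n, hn⟩ := trim_avoid hno
    refine ⟨oM.diag n, cls_eq_iff.mpr (diag_sameCls oM n).symm,
      by rw [show (oM.diag n).D = oM.D from rfl, hcard], ?_⟩
    intro x hx
    refine ⟨hsub (diag_subset oM n hx), fun hxB => hn x hx ?_⟩
    refine ⟨[oB], by simp, ?_⟩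
    intro o'' h
    rw [List.mem_singleton] at h
    subst h
    exact hxB

/-- Finiteness of the classes of a rank-`(j+1)` orthant not represented in a
same-class orthant. -/
lemma mu_sdiff_finite {j : ℕ} {o₁ o₂ : OD N} (hcard : o₁.D.card = j + 1)
    (hsc : SameCls o₁ o₂) : (mu j o₁.set \ mu j o₂.set).Finite := by
  classical
  set m : Fin N → ℤ := (interOD o₁ o₂).p with hm
  set E : Fin N → ℤ → OD N := fun e ℓ =>
    OD.cls ⟨fun i => if i = e then ℓ else o₁.p i, o₁.D.erase e, o₁.s⟩ with hE
  have hm2' : ∀ i ∈ o₁.D, cond (o₁.s i) (o₂.p i) (m i) := by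
    intro i hi
    show cond (o₁.s i) (o₂.p i)
      (if i ∈ o₁.D then (if o₁.s i then max (o₁.p i) (o₂.p i)
        else min (o₁.p i) (o₂.p i)) else o₁.p i)
    rw [if_pos hi]
    cases hs : o₁.s i <;> simp [cond, hs, le_max_right, min_le_right]
  have hmoff : ∀ i ∉ o₁.D, m i = o₁.p i := by
    intro i hi
    show (if i ∈ o₁.D then (if o₁.s i then max (o₁.p i) (o₂.p i)
      else min (o₁.p i) (o₂.p i)) else o₁.p i) = o₁.p i
    rw [if_neg hi]
  have hfin : Set.Finite (⋃ e ∈ (o₁.D : Set (Fin N)),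
      (E e) '' Set.Icc (min (o₁.p e) (m e)) (max (o₁.p e) (m e))) :=
    Set.Finite.biUnion (o₁.D.finite_toSet) fun e _ => (Set.finite_Icc _ _).image _
  apply hfin.subset
  rintro c ⟨⟨oM, rfl, hcardM, hsub⟩, hnot⟩
  obtain ⟨hD, hsgn, hoff, hcnd⟩ := subset_structure hsub
  have hcd : (o₁.D \ oM.D).card = 1 := by
    rw [Finset.card_sdiff_of_subset hD]
    omega
  obtain ⟨e, he⟩ := Finset.card_eq_one.mp hcd
  have heD : e ∈ o₁.D := (Finset.mem_sdiff.mp (he ▸ Finset.mem_singleton_self e)).1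
  have heM : e ∉ oM.D := (Finset.mem_sdiff.mp (he ▸ Finset.mem_singleton_self e)).2
  have hDM : oM.D = o₁.D.erase e := by
    ext i
    rw [Finset.mem_erase]
    constructor
    · intro hi
      exact ⟨fun hie => heM (hie ▸ hi), hD hi⟩
    · rintro ⟨hie, hi⟩
      by_contra hiM
      have hmem : i ∈ o₁.D \ oM.D := Finset.mem_sdiff.mpr ⟨hi, hiM⟩
      rw [he, Finset.mem_singleton] at hmem
      exact hie hmem
  set ℓ : ℤ := oM.p e with hℓ
  have hceq : oM.cls = E e ℓ := by
    rw [hE]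
    apply cls_eq_iff.mpr
    refine ⟨by rw [hDM], fun i hi => hsgn i hi, fun i hi => ?_⟩
    show oM.p i = if i = e then ℓ else o₁.p i
    by_cases hie : i = e
    · subst hie
      rw [if_pos rfl]
    · rw [if_neg hie]
      have hiD : i ∉ o₁.D := by
        intro hiD1
        exact hi (hDM ▸ Finset.mem_erase.mpr ⟨hie, hiD1⟩)
      exact hoff i hiD
  have hlow : cond (o₁.s e) (o₁.p e) ℓ := hcnd e heD
  have hnotup : ¬ cond (o₁.s e) (m e) ℓ := by
    intro hup
    apply hnot
    refine ⟨⟨fun i => if i = e then ℓ else m i, o₁.D.erase e, o₁.s⟩, ?_, ?_, ?_⟩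
    · rw [hceq, hE]
      apply cls_eq_iff.mpr
      refine ⟨rfl, fun i _ => rfl, fun i hi => ?_⟩
      show (if i = e then ℓ else m i) = if i = e then ℓ else o₁.p i
      by_cases hie : i = e
      · rw [if_pos hie, if_pos hie]
      · rw [if_neg hie, if_neg hie]
        exact hmoff i (fun hiD1 => hi (Finset.mem_erase.mpr ⟨hie, hiD1⟩))
    · show (o₁.D.erase e).card = j
      rw [Finset.card_erase_of_mem heD, hcard]
      omega
    · rintro x ⟨hx1, hx2⟩
      constructor
      · intro i hi2
        have hi1 : i ∈ o₁.D := hsc.1 ▸ hi2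
        rw [← hsc.2.1 i hi1]
        by_cases hie : i = e
        · have hxe : x i = ℓ := by
            have h9 := hx2 i (fun hmem => (Finset.mem_erase.mp hmem).1 hie)
            rw [show (⟨fun i' => if i' = e then ℓ else m i', o₁.D.erase e, o₁.s⟩ : OD N).p i =
              (if i = e then ℓ else m i) from rfl, if_pos hie] at h9
            exact h9
          rw [hxe, hie]
          exact cond_trans (hm2' e heD) hup
        · have hie' : i ∈ o₁.D.erase e := Finset.mem_erase.mpr ⟨hie, hi1⟩
          have hcx := hx1 i hie'
          rw [show (⟨fun i => if i = e then ℓ else m i, o₁.D.erase e, o₁.s⟩ : OD N).p i =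
            if i = e then ℓ else m i from rfl, if_neg hie] at hcx
          exact cond_trans (hm2' i hi1) hcx
      · intro i hi2
        have hi1 : i ∉ o₁.D := hsc.1 ▸ hi2
        have hie : i ≠ e := fun hie => hi1 (hie ▸ heD)
        have hx2' := hx2 i (fun hmem => hi1 (Finset.mem_of_mem_erase hmem))
        rw [show (⟨fun i => if i = e then ℓ else m i, o₁.D.erase e, o₁.s⟩ : OD N).p i =
          if i = e then ℓ else m i from rfl, if_neg hie] at hx2'
        rw [hx2', hmoff i hi1]
        exact hsc.2.2 i hi1
  refine Set.mem_biUnion (Finset.mem_coe.mpr heD) ?_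
  refine ⟨ℓ, ?_, hceq.symm⟩
  rw [Set.mem_Icc]
  cases hs : o₁.s e <;> rw [hs] at hlow hnotup <;>
    simp only [cond, if_true, if_false] at hlow hnotup <;> simp at hlow hnotup
  · exact ⟨(min_le_right _ _).trans (le_of_lt (lt_of_not_ge (by simpa using hnotup))),
      hlow.trans (le_max_left _ _)⟩
  · exact ⟨(min_le_left _ _).trans hlow,
      (le_of_lt (lt_of_not_ge (by simpa using hnotup))).trans (le_max_right _ _)⟩

end Stmt9Aux

namespace Stmt9Aux

open Finset

variable {N : ℕ}

lemma ncard_biUnion_eq_sum {β αI : Type*} (t : Finset αI) (f : αI → Set β) :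
    (∀ a ∈ t, (f a).Finite) → (∀ a ∈ t, ∀ b ∈ t, a ≠ b → Disjoint (f a) (f b)) →
    (⋃ a ∈ t, f a).ncard = ∑ a ∈ t, (f a).ncard := by
  classical
  induction t using Finset.induction_on with
  | empty => intro _ _; simp
  | @insert a s ha ih =>
    intro hfin hdis
    rw [Finset.sum_insert ha]
    have hre : (⋃ b ∈ insert a s, f b) = f a ∪ ⋃ b ∈ s, f b := by
      simp [Set.biUnion_insert]
    rw [hre]
    have hd : Disjoint (f a) (⋃ b ∈ s, f b) := by
      rw [Set.disjoint_right]
      intro c hc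
      simp only [Set.mem_iUnion, exists_prop] at hc
      obtain ⟨b, hb, hcb⟩ := hc
      intro hca
      have hne : a ≠ b := fun h => ha (h ▸ hb)
      exact (Set.disjoint_left.mp (hdis a (Finset.mem_insert_self a s) b
        (Finset.mem_insert_of_mem hb) hne)) hca hcb
    rw [Set.ncard_union_eq hd (hfin a (Finset.mem_insert_self a s))
      (Set.Finite.biUnion s.finite_toSet (fun b hb => hfin b (Finset.mem_insert_of_mem hb)))]
    rw [ih (fun b hb => hfin b (Finset.mem_insert_of_mem hb))
      (fun b hb b' hb' hne => hdis b (Finset.mem_insert_of_mem hb) b'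
        (Finset.mem_insert_of_mem hb') hne)]

lemma ncard_diff_add_inter {β : Type*} (s t : Set β) (hs : s.Finite) :
    s.ncard = (s \ t).ncard + (s ∩ t).ncard := by
  have hd : Disjoint (s \ t) (s ∩ t) := by
    rw [Set.disjoint_left]
    rintro c ⟨_, hct⟩ ⟨_, hct'⟩
    exact hct hct'
  rw [← Set.ncard_union_eq hd hs.diff (hs.inter_of_left t), Set.diff_union_inter]

end Stmt9Aux


/-- the total corank-1 germ flow of an element of `C(Γ^k(S))` vanishes. -/
theorem stmt9 {N : ℕ} (S : Set (Fin N → ℤ)) (hS : IsOrthohedral S) (k : ℕ) (hk : 0 < k)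
    (g : Equiv.Perm (Fin N → ℤ)) (hg : IsPeiPerm S g) (hrk : rankLE g k)
    (hfix : FixesGerm S k g)
    (T : Set (Fin N → ℤ)) (hT : IsOrthohedral T) (hTrk : orthRank T ≤ k)
    (hsupp : ∀ x ∉ T, g x = x)
    (Λ : Finset (Set (Fin N → ℤ)))
    (hΛorth : ∀ L ∈ Λ, IsOrthantOfRank L k ∧ L ⊆ S)
    (hdisj : (Λ : Set (Set (Fin N → ℤ))).PairwiseDisjoint id)
    (hiso : ∀ L ∈ Λ, IsometricOn (⇑g) L ∧ Commensurable L (⇑g '' L))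
    (hrep : ∀ L', IsOrthantOfRank L' k → L' ⊆ T ∩ S → ∃ L ∈ Λ, Commensurable L L') :
    (∑ L ∈ Λ, ((heightAt (L \ (⇑g '' L)) (k - 1) : ℤ)
      - (heightAt ((⇑g '' L) \ L) (k - 1) : ℤ))) = 0 := by
  classical
  open Stmt9Aux in
  set j := k - 1 with hj
  have hk1 : j + 1 = k := by omega
  obtain ⟨pdg⟩ := peiData_of hg
  obtain ⟨pdg'⟩ := peiData_symm pdg hg.2
  set F := classMap pdg with hF
  set F' := classMap pdg' with hF'
  have hgS : ⇑g '' S = S := image_eq_self_of_off_id hg.2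
  have hgT : ⇑g '' T = T := image_eq_self_of_off_id hsupp
  have hgTS : ⇑g '' (T ∩ S) = T ∩ S := by
    rw [Set.image_inter g.injective, hgT, hgS]
  have hrt1 : ∀ c : OD N, c.cls = c → F' (F c) = c :=
    fun c hc => classMap_roundtrip pdg pdg' (fun x => g.symm_apply_apply x) hc
  have hrt2 : ∀ c : OD N, c.cls = c → F (F' c) = c :=
    fun c hc => classMap_roundtrip pdg' pdg (fun x => g.apply_symm_apply x) hc
  have hodL : ∀ L ∈ Λ, ∃ o : OD N, o.D.card = k ∧ L = o.set :=
    fun L hL => exists_OD_of_orthant (hΛorth L hL).1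
  have hodgL : ∀ L ∈ Λ, ∃ o : OD N, o.D.card = k ∧ ⇑g '' L = o.set := by
    intro L hL
    obtain ⟨a, A, hA, hiso'⟩ := (hiso L hL).1
    have himg : ⇑g '' L = (fun x => a + A.mulVec x) '' L := Set.image_congr hiso'
    rw [himg]
    exact exists_OD_of_orthant (isOrthantOfRank_affine_image a hA (hΛorth L hL).1)
  -- region facts
  have hLT : ∀ L ∈ Λ, L \ ⇑g '' L ⊆ T ∩ S := by
    intro L hL x hx
    refine ⟨?_, (hΛorth L hL).2 hx.1⟩
    by_contra hxT
    exact hx.2 ⟨x, hx.1, hsupp x hxT⟩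
  have hgLT : ∀ L ∈ Λ, ⇑g '' L \ L ⊆ T ∩ S := by
    intro L hL x hx
    obtain ⟨y, hy, hyx⟩ := hx.1
    constructor
    · by_contra hxT
      have h1 := hsupp x hxT
      have h2 : y = x := g.injective (by rw [hyx, h1])
      exact hx.2 (h2 ▸ hy)
    · have hxS : x ∈ ⇑g '' S := ⟨y, (hΛorth L hL).2 hy, hyx⟩
      rwa [hgS] at hxS
  -- class sets
  set P : Set (OD N) := {c | ∃ L ∈ Λ, c ∈ mu j L} with hP
  set Q : Set (OD N) := {c | ∃ L ∈ Λ, c ∈ mu j (⇑g '' L)} with hQ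
  set W : Set (OD N) := mu j (T ∩ S) with hW
  have hPdis : ∀ L ∈ Λ, ∀ L' ∈ Λ, L ≠ L' → Disjoint (mu j L) (mu j L') := by
    intro L hL L' hL' hne
    exact mu_disjoint_of_disjoint (hdisj hL hL' hne)
  have hQdis : ∀ L ∈ Λ, ∀ L' ∈ Λ, L ≠ L' →
      Disjoint (mu j (⇑g '' L)) (mu j (⇑g '' L')) := by
    intro L hL L' hL' hne
    apply mu_disjoint_of_disjoint
    exact (Set.disjoint_image_iff g.injective).mpr (hdisj hL hL' hne)
  have hPQL : ∀ L ∈ Λ, mu j (L \ ⇑g '' L) = mu j L \ mu j (⇑g '' L) := by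
    intro L hL
    obtain ⟨ogL, hogLc, hogLs⟩ := hodgL L hL
    rw [hogLs, mu_diff_orthant]
  have hQPL : ∀ L ∈ Λ, mu j (⇑g '' L \ L) = mu j (⇑g '' L) \ mu j L := by
    intro L hL
    obtain ⟨oL, hoLc, hoLs⟩ := hodL L hL
    rw [hoLs, mu_diff_orthant]
  have hterm : ∀ L ∈ Λ, (heightAt (L \ ⇑g '' L) j : ℤ) - (heightAt (⇑g '' L \ L) j : ℤ)
      = ((mu j L \ mu j (⇑g '' L)).ncard : ℤ) - ((mu j (⇑g '' L) \ mu j L).ncard : ℤ) := by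
    intro L hL
    rw [heightAt_eq, heightAt_eq, hPQL L hL, hQPL L hL]
  have hALfin : ∀ L ∈ Λ, (mu j L \ mu j (⇑g '' L)).Finite := by
    intro L hL
    obtain ⟨oL, hoLc, hoLs⟩ := hodL L hL
    obtain ⟨ogL, hogLc, hogLs⟩ := hodgL L hL
    have hcomm : Commensurable oL.set ogL.set := by
      rw [← hoLs, ← hogLs]
      exact (hiso L hL).2
    have hsc : SameCls oL ogL := (commensurable_iff_sameCls hoLc hogLc).mp hcomm
    have hfin := mu_sdiff_finite (j := j) (by rw [hoLc, ← hk1]) hsc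
    rw [hogLs, hoLs]
    exact hfin
  have hBLfin : ∀ L ∈ Λ, (mu j (⇑g '' L) \ mu j L).Finite := by
    intro L hL
    obtain ⟨oL, hoLc, hoLs⟩ := hodL L hL
    obtain ⟨ogL, hogLc, hogLs⟩ := hodgL L hL
    have hcomm : Commensurable oL.set ogL.set := by
      rw [← hoLs, ← hogLs]
      exact (hiso L hL).2
    have hsc : SameCls ogL oL := ((commensurable_iff_sameCls hoLc hogLc).mp hcomm).symm
    have hfin := mu_sdiff_finite (j := j) (by rw [hogLc, ← hk1]) hsc
    rw [hogLs, hoLs]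
    exact hfin
  set Abig := ⋃ L ∈ Λ, (mu j L \ mu j (⇑g '' L)) with hA
  set Bbig := ⋃ L ∈ Λ, (mu j (⇑g '' L) \ mu j L) with hB
  have hAfin : Abig.Finite := Set.Finite.biUnion Λ.finite_toSet (fun L hL => hALfin L hL)
  have hBfin : Bbig.Finite := Set.Finite.biUnion Λ.finite_toSet (fun L hL => hBLfin L hL)
  have hsumA : ∑ L ∈ Λ, (mu j L \ mu j (⇑g '' L)).ncard = Abig.ncard :=
    (ncard_biUnion_eq_sum Λ _ hALfin
      (fun L hL L' hL' hne => (hPdis L hL L' hL' hne).mono Set.diff_subset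
        Set.diff_subset)).symm
  have hsumB : ∑ L ∈ Λ, (mu j (⇑g '' L) \ mu j L).ncard = Bbig.ncard :=
    (ncard_biUnion_eq_sum Λ _ hBLfin
      (fun L hL L' hL' hne => (hQdis L hL L' hL' hne).mono Set.diff_subset
        Set.diff_subset)).symm
  -- cross-term identification
  have hcross : Abig ∩ Q = Bbig ∩ P := by
    ext c
    constructor
    · rintro ⟨hcA, hcQ⟩
      simp only [hA, Set.mem_iUnion, exists_prop] at hcA
      obtain ⟨L, hL, hcPL, hcQL⟩ := hcA
      obtain ⟨L', hL', hcQ'⟩ := hcQ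
      have hne : L ≠ L' := fun h => hcQL (h ▸ hcQ')
      constructor
      · simp only [hB, Set.mem_iUnion, exists_prop]
        refine ⟨L', hL', hcQ', ?_⟩
        intro hcPL'
        exact (Set.disjoint_left.mp (hPdis L hL L' hL' hne)) hcPL hcPL'
      · exact ⟨L, hL, hcPL⟩
    · rintro ⟨hcB, hcP⟩
      simp only [hB, Set.mem_iUnion, exists_prop] at hcB
      obtain ⟨L, hL, hcQL, hcPL⟩ := hcB
      obtain ⟨L', hL', hcP'⟩ := hcP
      have hne : L ≠ L' := fun h => hcPL (h ▸ hcP')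
      constructor
      · simp only [hA, Set.mem_iUnion, exists_prop]
        refine ⟨L', hL', hcP', ?_⟩
        intro hcQL'
        exact (Set.disjoint_left.mp (hQdis L hL L' hL' hne)) hcQL hcQL'
      · exact ⟨L, hL, hcQL⟩
  have hAdiff : Abig \ Q = P \ Q := by
    ext c
    constructor
    · rintro ⟨hcA, hcQ⟩
      simp only [hA, Set.mem_iUnion, exists_prop] at hcA
      obtain ⟨L, hL, hcPL, _⟩ := hcA
      exact ⟨⟨L, hL, hcPL⟩, hcQ⟩
    · rintro ⟨⟨L, hL, hcPL⟩, hcQ⟩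
      refine ⟨?_, hcQ⟩
      simp only [hA, Set.mem_iUnion, exists_prop]
      exact ⟨L, hL, hcPL, fun hcg => hcQ ⟨L, hL, hcg⟩⟩
  have hBdiff : Bbig \ P = Q \ P := by
    ext c
    constructor
    · rintro ⟨hcB, hcP⟩
      simp only [hB, Set.mem_iUnion, exists_prop] at hcB
      obtain ⟨L, hL, hcQL, _⟩ := hcB
      exact ⟨⟨L, hL, hcQL⟩, hcP⟩
    · rintro ⟨⟨L, hL, hcQL⟩, hcP⟩
      refine ⟨?_, hcP⟩
      simp only [hB, Set.mem_iUnion, exists_prop]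
      exact ⟨L, hL, hcQL, fun hcl => hcP ⟨L, hL, hcl⟩⟩
  -- P \ Q and Q \ P live inside W
  have hPQW : P \ Q ⊆ W := by
    rintro c ⟨⟨L, hL, hcPL⟩, hcQ⟩
    have hcdiff : c ∈ mu j L \ mu j (⇑g '' L) := ⟨hcPL, fun h => hcQ ⟨L, hL, h⟩⟩
    rw [← hPQL L hL] at hcdiff
    exact mu_mono (hLT L hL) hcdiff
  have hQPW : Q \ P ⊆ W := by
    rintro c ⟨⟨L, hL, hcQL⟩, hcP⟩
    have hcdiff : c ∈ mu j (⇑g '' L) \ mu j L := ⟨hcQL, fun h => hcP ⟨L, hL, h⟩⟩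
    rw [← hQPL L hL] at hcdiff
    exact mu_mono (hgLT L hL) hcdiff
  have hPQ_eq : P \ Q = (W \ Q) \ (W \ P) := by
    ext c
    constructor
    · intro hc
      have hcW := hPQW hc
      exact ⟨⟨hcW, hc.2⟩, fun h => h.2 hc.1⟩
    · rintro ⟨⟨hcW, hcQ⟩, hc⟩
      have hcP : c ∈ P := by
        by_contra hcP
        exact hc ⟨hcW, hcP⟩
      exact ⟨hcP, hcQ⟩
  have hQP_eq : Q \ P = (W \ P) \ (W \ Q) := by
    ext c
    constructor
    · intro hc
      have hcW := hQPW hc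
      exact ⟨⟨hcW, hc.2⟩, fun h => h.2 hc.1⟩
    · rintro ⟨⟨hcW, hcP⟩, hc⟩
      have hcQ : c ∈ Q := by
        by_contra hcQ
        exact hc ⟨hcW, hcQ⟩
      exact ⟨hcQ, hcP⟩
  -- claim D : W \ P is finite
  have hCfin : (W \ P).Finite := by
    obtain ⟨lTS, hl1, hl2⟩ := inter_orthohedral_list hT hS
    have hWsub : W ⊆ {c | ∃ o ∈ lTS, c ∈ mu j o.set} := mu_subset_union_list hl2.le
    have hsub : W \ P ⊆ ⋃ o ∈ {o : OD N | o ∈ lTS}, (mu j o.set \ P) := by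
      rintro c ⟨hcW, hcP⟩
      obtain ⟨o, ho, hco⟩ := hWsub hcW
      exact Set.mem_biUnion ho ⟨hco, hcP⟩
    refine (Set.Finite.biUnion (lTS.finite_toSet) (fun o ho => ?_)).subset hsub
    have hrle : o.D.card ≤ k := by
      have h1 : IsOrthantOfRank o.set o.D.card := orthant_of_OD o
      have h2 : o.set ⊆ T := (hl1 o ho).trans Set.inter_subset_left
      exact (le_csSup (bddAbove_rankSet T) ⟨o.set, h1, h2⟩).trans hTrk
    rcases lt_trichotomy o.D.card j with hlt | heq | hgt
    · refine Set.Finite.subset (Set.finite_empty) ?_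
      rw [mu_empty_of_card_lt hlt]
      exact Set.diff_subset
    · refine Set.Finite.subset (Set.finite_singleton o.cls) ?_
      rw [mu_eq_singleton_of_card_eq heq]
      exact Set.diff_subset
    · have hcard1 : o.D.card = j + 1 := by omega
      have hok : IsOrthantOfRank o.set k := by
        rw [← hk1, ← hcard1]
        exact orthant_of_OD o
      obtain ⟨L, hLΛ, hcomm⟩ := hrep o.set hok (hl1 o ho)
      obtain ⟨oL, hoLc, hoLs⟩ := hodL L hLΛ
      have hcomm' : Commensurable oL.set o.set := by
        rw [← hoLs]
        exact hcomm
      have hsc : SameCls o oL :=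
        ((commensurable_iff_sameCls hoLc (by rw [hcard1, hk1])).mp hcomm').symm
      refine (mu_sdiff_finite hcard1 hsc).subset ?_
      rintro c ⟨hc1, hc2⟩
      refine ⟨hc1, fun hcl => hc2 ⟨L, hLΛ, ?_⟩⟩
      rw [hoLs]
      exact hcl
  -- F maps W \ P bijectively onto W \ Q
  have hFC : F '' (W \ P) = W \ Q := by
    apply Set.Subset.antisymm
    · rintro _ ⟨c, ⟨hcW, hcP⟩, rfl⟩
      constructor
      · have h1 : F c ∈ mu j (⇑g '' (T ∩ S)) := classMap_mem_mu pdg hcW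
        rwa [hgTS] at h1
      · rintro ⟨L, hL, hcgL⟩
        have h1 : F' (F c) ∈ mu j (⇑g.symm '' (⇑g '' L)) := classMap_mem_mu pdg' hcgL
        rw [Equiv.symm_image_image, hrt1 c (mu_cls_self hcW)] at h1
        exact hcP ⟨L, hL, h1⟩
    · rintro c' ⟨hc'W, hc'Q⟩
      refine ⟨F' c', ⟨?_, ?_⟩, hrt2 c' (mu_cls_self hc'W)⟩
      · have h1 : F' c' ∈ mu j (⇑g.symm '' (T ∩ S)) := classMap_mem_mu pdg' hc'W
        have h2 : ⇑g.symm '' (T ∩ S) = T ∩ S := by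
          conv_lhs => rw [← hgTS]
          rw [Equiv.symm_image_image]
        rwa [h2] at h1
      · rintro ⟨L, hL, hFL⟩
        have h3 : F (F' c') ∈ mu j (⇑g '' L) := classMap_mem_mu pdg hFL
        rw [hrt2 c' (mu_cls_self hc'W)] at h3
        exact hc'Q ⟨L, hL, h3⟩
  have hFinjC : Set.InjOn F (W \ P) := by
    intro c1 h1 c2 h2 heq
    have hcongr := congrArg F' heq
    rwa [hrt1 c1 (mu_cls_self h1.1), hrt1 c2 (mu_cls_self h2.1)] at hcongr
  have hC'fin : (W \ Q).Finite := by
    rw [← hFC]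
    exact hCfin.image F
  have hCC' : (W \ Q).ncard = (W \ P).ncard := by
    rw [← hFC]
    exact Set.ncard_image_of_injOn hFinjC
  -- final computation
  rw [Finset.sum_congr rfl hterm, Finset.sum_sub_distrib, ← Nat.cast_sum, ← Nat.cast_sum,
    hsumA, hsumB]
  have eA : Abig.ncard = (P \ Q).ncard + (Abig ∩ Q).ncard := by
    rw [← hAdiff]
    exact ncard_diff_add_inter Abig Q hAfin
  have eB : Bbig.ncard = (Q \ P).ncard + (Abig ∩ Q).ncard := by
    rw [← hBdiff, hcross]
    exact ncard_diff_add_inter Bbig P hBfin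
  have ePQ : (P \ Q).ncard = ((W \ Q) \ (W \ P)).ncard := by rw [hPQ_eq]
  have eQP : (Q \ P).ncard = ((W \ P) \ (W \ Q)).ncard := by rw [hQP_eq]
  have e1 : (W \ Q).ncard = ((W \ Q) \ (W \ P)).ncard + ((W \ Q) ∩ (W \ P)).ncard :=
    ncard_diff_add_inter _ _ hC'fin
  have e2 : (W \ P).ncard = ((W \ P) \ (W \ Q)).ncard + ((W \ P) ∩ (W \ Q)).ncard :=
    ncard_diff_add_inter _ _ hCfin
  have e3 : ((W \ Q) ∩ (W \ P)).ncard = ((W \ P) ∩ (W \ Q)).ncard := by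
    rw [Set.inter_comm]
  omega


end PeiPaper
end

section
/- For an orthohedral set S and each k ≤ rk(S), there is a normal series G_{k-1}(S) ≤ C^{ord}(Γ^k(S)) ≤ C(Γ^k(S)) ≤ G_k(S) in pei(S); in particular, any element of pei(S) of rank ≤ k+1 fixing all rank-k germs and preserving the germ orderings restricted to a rank-(k+1) orthant that it maps to a commensurable orthant must act as a parallel translation there. -/
open Pointwise

namespace PeiPaper

section Aux

variable {N : ℕ}

lemma isOrthMat_one : IsOrthMat (1 : Matrix (Fin N) (Fin N) ℤ) := by
  simp [IsOrthMat]

lemma row_spec {A : Matrix (Fin N) (Fin N) ℤ} (hA : IsOrthMat A) (i : Fin N) :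
    ∃ j, (A i j = 1 ∨ A i j = -1) ∧ ∀ l, l ≠ j → A i l = 0 := by
  have hrow : ∑ l, A i l * A i l = 1 := by
    have h1 : (A * A.transpose) i i = (1 : Matrix (Fin N) (Fin N) ℤ) i i := by rw [hA]
    simpa [Matrix.mul_apply, Matrix.transpose_apply, Matrix.one_apply] using h1
  have hnn : ∀ l : Fin N, 0 ≤ A i l * A i l := fun l => mul_self_nonneg _
  have hex : ∃ j, A i j ≠ 0 := by
    by_contra h
    push_neg at h
    simp [h] at hrow
  obtain ⟨j, hj⟩ := hex
  have h1 : A i j * A i j ≤ 1 := by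
    rw [← hrow]
    exact Finset.single_le_sum (fun l _ => hnn l) (Finset.mem_univ j)
  have h2 : 1 ≤ A i j * A i j := by rcases lt_or_gt_of_ne hj with h | h <;> nlinarith
  have heq : A i j * A i j = 1 := le_antisymm h1 h2
  refine ⟨j, Int.isUnit_iff.mp (IsUnit.of_mul_eq_one _ heq), ?_⟩
  intro l hl
  by_contra hl0
  have h2' : 1 ≤ A i l * A i l := by rcases lt_or_gt_of_ne hl0 with h | h <;> nlinarith
  have hsub : A i l * A i l + A i j * A i j ≤ ∑ m, A i m * A i m := by
    have := Finset.sum_le_sum_of_subset_of_nonneg (Finset.subset_univ ({l, j} : Finset (Fin N)))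
      (fun m _ _ => hnn m)
    simpa [Finset.sum_pair hl] using this
  rw [hrow] at hsub
  nlinarith

lemma signed_perm {A : Matrix (Fin N) (Fin N) ℤ} (hA : IsOrthMat A) :
    ∃ (π : Equiv.Perm (Fin N)) (ε : Fin N → ℤ),
      (∀ i, ε i = 1 ∨ ε i = -1) ∧ ∀ v i, A.mulVec v i = ε i * v (π i) := by
  classical
  choose f hf1 hf2 using row_spec hA
  have hinj : Function.Injective f := by
    intro i i' hii
    by_contra hne
    have h0 : (A * A.transpose) i i' = 0 := by
      rw [hA]; simp [Matrix.one_apply, hne]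
    have hsum : ∑ l, A i l * A i' l = 0 := by
      simpa [Matrix.mul_apply, Matrix.transpose_apply] using h0
    have hone : ∑ l, A i l * A i' l = A i (f i) * A i' (f i) := by
      apply Finset.sum_eq_single
      · intro l _ hl
        rw [hf2 i l hl]; ring
      · simp
    rw [hone] at hsum
    have e1 := hf1 i
    have e2 := hf1 i'
    rw [← hii] at e2
    rcases e1 with h | h <;> rcases e2 with h' | h' <;> rw [h, h'] at hsum <;> norm_num at hsum
  refine ⟨Equiv.ofBijective f (Finite.injective_iff_bijective.mp hinj), fun i => A i (f i),
    hf1, ?_⟩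
  intro v i
  show A.mulVec v i = A i (f i) * v (Equiv.ofBijective f _ i)
  rw [Equiv.ofBijective_apply]
  rw [Matrix.mulVec, dotProduct]
  apply Finset.sum_eq_single
  · intro l _ hl
    rw [hf2 i l hl, zero_mul]
  · simp

/-- Concrete description of an integral orthant. -/
def Cone (b ε : Fin N → ℤ) (I : Finset (Fin N)) : Set (Fin N → ℤ) :=
  {x | (∀ i ∈ I, 0 ≤ ε i * (x i - b i)) ∧ ∀ i ∉ I, x i = b i}

lemma base_mem_cone (b ε : Fin N → ℤ) (I : Finset (Fin N)) : b ∈ Cone b ε I :=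
  ⟨fun i _ => by simp, fun i _ => rfl⟩

lemma ray_mem_cone {b ε : Fin N → ℤ} {I : Finset (Fin N)} {i : Fin N} (hi : i ∈ I)
    {c : ℤ} (hc : 0 ≤ ε i * c) {x : Fin N → ℤ} (hx : x ∈ Cone b ε I) :
    x + c • Pi.single i 1 ∈ Cone b ε I := by
  have hadd : ∀ l, (x + c • (Pi.single i 1 : Fin N → ℤ)) l = x l + c * (if l = i then 1 else 0) := by
    intro l; simp [Pi.single_apply]
  constructor
  · intro l hl
    rw [hadd l]
    by_cases hli : l = i
    · rw [if_pos hli, mul_one]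
      subst hli
      nlinarith [hx.1 l hl, hc]
    · rw [if_neg hli, mul_zero, add_zero]
      exact hx.1 l hl
  · intro l hl
    have hli : l ≠ i := fun h => hl (h ▸ hi)
    rw [hadd l, if_neg hli, mul_zero, add_zero]
    exact hx.2 l hl

lemma cone_mono {b ε : Fin N → ℤ} {J I : Finset (Fin N)} (h : J ⊆ I) :
    Cone b ε J ⊆ Cone b ε I := by
  intro x hx
  refine ⟨fun i hi => ?_, fun i hi => hx.2 i (fun hiJ => hi (h hiJ))⟩
  by_cases hiJ : i ∈ J
  · exact hx.1 i hiJ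
  · rw [hx.2 i hiJ]; simp

lemma cone_isOrthant {b ε : Fin N → ℤ} {I : Finset (Fin N)} (hε : ∀ i, ε i = 1 ∨ ε i = -1) :
    IsOrthantOfRank (Cone b ε I) I.card := by
  classical
  refine ⟨b, Matrix.diagonal ε, I, ?_, rfl, ?_⟩
  · show Matrix.diagonal ε * (Matrix.diagonal ε).transpose = 1
    rw [Matrix.diagonal_transpose, Matrix.diagonal_mul_diagonal]
    have : (fun i => ε i * ε i) = fun _ : Fin N => (1 : ℤ) :=
      funext fun i => by rcases hε i with h | h <;> rw [h] <;> norm_num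
    rw [this, Matrix.diagonal_one]
  · ext x
    simp only [Set.mem_image, stdFace, Set.mem_setOf_eq]
    constructor
    · rintro ⟨h1, h2⟩
      refine ⟨fun i => if i ∈ I then ε i * (x i - b i) else 0, ⟨?_, ?_⟩, ?_⟩
      · intro i
        by_cases hi : i ∈ I
        · simpa [hi] using h1 i hi
        · simp [hi]
      · intro i hi; simp [hi]
      · funext i
        by_cases hi : i ∈ I
        · simp only [Pi.add_apply, Matrix.mulVec_diagonal, hi, if_true]
          rcases hε i with h | h <;> rw [h] <;> ring
        · simp only [Pi.add_apply, Matrix.mulVec_diagonal, hi, if_false, mul_zero, add_zero]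
          exact (h2 i hi).symm
    · rintro ⟨v, ⟨hv0, hvY⟩, rfl⟩
      constructor
      · intro i hi
        have h3 : (b + (Matrix.diagonal ε).mulVec v) i - b i = ε i * v i := by
          simp [Matrix.mulVec_diagonal]
        rw [h3]
        have := hv0 i
        rcases hε i with h | h <;> rw [h] <;> nlinarith
      · intro i hi
        simp [Matrix.mulVec_diagonal, hvY i hi]

lemma orthant_eq_cone {L : Set (Fin N → ℤ)} {k : ℕ} (hL : IsOrthantOfRank L k) :
    ∃ (b ε : Fin N → ℤ) (I : Finset (Fin N)), I.card = k ∧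
      (∀ i, ε i = 1 ∨ ε i = -1) ∧ L = Cone b ε I := by
  classical
  obtain ⟨a, A, Y, hA, hY, rfl⟩ := hL
  obtain ⟨π, ε, hε, hm⟩ := signed_perm hA
  have hε2 : ∀ i, ε i * ε i = 1 := fun i => by rcases hε i with h | h <;> rw [h] <;> norm_num
  refine ⟨a, ε, Finset.univ.filter (fun i => π i ∈ Y), ?_, hε, ?_⟩
  · rw [← hY]
    have himg : Finset.univ.filter (fun i => π i ∈ Y) = Y.image π.symm := by
      ext i
      simp only [Finset.mem_filter, Finset.mem_univ, true_and, Finset.mem_image]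
      constructor
      · intro h; exact ⟨π i, h, by simp⟩
      · rintro ⟨y, hy, rfl⟩; simpa using hy
    rw [himg, Finset.card_image_of_injective _ π.symm.injective]
  · ext x
    simp only [Set.mem_image, stdFace, Set.mem_setOf_eq, Cone, Finset.mem_filter,
      Finset.mem_univ, true_and]
    constructor
    · rintro ⟨v, ⟨hv0, hvY⟩, rfl⟩
      constructor
      · intro i hi
        have h3 : (a + A.mulVec v) i - a i = ε i * v (π i) := by
          simp [hm v i]
        rw [h3]
        have := hv0 (π i)
        rcases hε i with h | h <;> rw [h] <;> nlinarith
      · intro i hi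
        have h3 : (a + A.mulVec v) i = a i + ε i * v (π i) := by
          simp [hm v i]
        rw [h3, hvY (π i) hi, mul_zero, add_zero]
    · rintro ⟨h1, h2⟩
      refine ⟨fun j => ε (π.symm j) * (x (π.symm j) - a (π.symm j)), ⟨?_, ?_⟩, ?_⟩
      · intro j
        show 0 ≤ ε (π.symm j) * (x (π.symm j) - a (π.symm j))
        by_cases hj : π (π.symm j) ∈ Y
        · exact h1 (π.symm j) hj
        · rw [h2 (π.symm j) hj]; simp
      · intro j hj
        show ε (π.symm j) * (x (π.symm j) - a (π.symm j)) = 0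
        rw [h2 (π.symm j) (by simpa using hj)]; simp
      · funext i
        have h3 : A.mulVec (fun j => ε (π.symm j) * (x (π.symm j) - a (π.symm j))) i
            = ε i * (ε i * (x i - a i)) := by
          rw [hm]; simp
        simp only [Pi.add_apply, h3, ← mul_assoc, hε2, one_mul]
        ring

lemma orthant_rank_le {L : Set (Fin N → ℤ)} {m : ℕ} (h : IsOrthantOfRank L m) : m ≤ N := by
  obtain ⟨a, A, Y, _, hY, _⟩ := h
  rw [← hY]
  exact le_trans (Finset.card_le_univ Y) (by simp)

lemma rays_subset {b b' ε ε' : Fin N → ℤ} {I J : Finset (Fin N)}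
    (hε' : ∀ i, ε' i = 1 ∨ ε' i = -1)
    (h : Cone b' ε' J ⊆ Cone b ε I) : J ⊆ I := by
  intro j hj
  by_contra hjI
  have h0 := h (base_mem_cone b' ε' J)
  have h1 : b' + (ε' j) • Pi.single j 1 ∈ Cone b ε I := by
    apply h
    refine ray_mem_cone hj ?_ (base_mem_cone b' ε' J)
    rcases hε' j with hh | hh <;> rw [hh] <;> norm_num
  have e0 := h0.2 j hjI
  have e1 := h1.2 j hjI
  have e1' : b' j + ε' j = b j := by
    simpa [Pi.single_apply] using e1
  rcases hε' j with hh | hh <;> rw [hh] at e1' <;> omega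

lemma orthRank_eq {L : Set (Fin N → ℤ)} {k : ℕ} (hL : IsOrthantOfRank L k) :
    orthRank L = k := by
  have hub : ∀ m ∈ {m | ∃ M, IsOrthantOfRank M m ∧ M ⊆ L}, m ≤ k := by
    rintro m ⟨M, hM, hML⟩
    obtain ⟨b, ε, I, hI, hε, rfl⟩ := orthant_eq_cone hL
    obtain ⟨b', ε', J, hJ, hε', rfl⟩ := orthant_eq_cone hM
    rw [← hI, ← hJ]
    exact Finset.card_le_card (rays_subset hε' hML)
  apply le_antisymm
  · exact csSup_le ⟨k, L, hL, subset_rfl⟩ hub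
  · exact le_csSup ⟨k, hub⟩ ⟨L, hL, subset_rfl⟩

lemma orthant_nonempty {L : Set (Fin N → ℤ)} {k : ℕ} (hL : IsOrthantOfRank L k) :
    L.Nonempty := by
  obtain ⟨b, ε, I, _, _, rfl⟩ := orthant_eq_cone hL
  exact ⟨b, base_mem_cone b ε I⟩

lemma commensurable_pair {L L' : Set (Fin N → ℤ)} {k : ℕ} (hL : IsOrthantOfRank L k)
    (hL' : IsOrthantOfRank L' k) (hsub : L' ⊆ L) :
    Commensurable L L' ∧ Commensurable L' L := by
  have hint : L ∩ L' = L' := Set.inter_eq_self_of_subset_right hsub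
  have hint' : L' ∩ L = L' := Set.inter_eq_self_of_subset_left hsub
  have hne := orthant_nonempty hL'
  have r1 : orthRank L = k := orthRank_eq hL
  have r2 : orthRank L' = k := orthRank_eq hL'
  exact ⟨⟨hint.symm ▸ hne, by rw [hint, r1, r2], by rw [hint]⟩,
    ⟨hint'.symm ▸ hne, by rw [hint'], by rw [hint', r1, r2]⟩⟩


lemma singleton_orthant (p : Fin N → ℤ) : IsOrthantOfRank ({p} : Set (Fin N → ℤ)) 0 := by
  have h : ({p} : Set (Fin N → ℤ)) = Cone p 1 ∅ := by
    ext x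
    simp [Cone, funext_iff, eq_comm]
  rw [h]
  simpa using cone_isOrthant (b := p) (ε := 1) (I := ∅) (fun i => Or.inl rfl)

lemma exists_tail {T : Set (Fin N → ℤ)} (hT : IsOrthohedral T) {k : ℕ}
    (hrk : orthRank T < k) {L : Set (Fin N → ℤ)} (hL : IsOrthantOfRank L k) :
    ∃ L', IsOrthantOfRank L' k ∧ L' ⊆ L ∧ Commensurable L L' ∧ Commensurable L' L ∧
      ∀ x ∈ L', x ∉ T := by
  classical
  obtain ⟨b, ε, I, hI, hε, rfl⟩ := orthant_eq_cone hL
  obtain ⟨𝓛, hfin, horth, rfl⟩ := hT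
  have key : ∀ M ∈ 𝓛, ∃ c : ℤ, ∀ x ∈ M, ∃ i ∈ I, ε i * (x i - b i) ≤ c := by
    intro M hM
    obtain ⟨m, hMo⟩ := horth M hM
    have hm_le : m ≤ orthRank (⋃₀ 𝓛) := by
      apply le_csSup
      · refine ⟨N, ?_⟩
        rintro n ⟨M', hM', _⟩
        exact orthant_rank_le hM'
      · exact ⟨M, hMo, Set.subset_sUnion_of_mem hM⟩
    obtain ⟨bM, εM, JM, hJM, hεM, rfl⟩ := orthant_eq_cone hMo
    have hns : ¬ I ⊆ JM := by
      intro hsub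
      have := Finset.card_le_card hsub
      omega
    obtain ⟨i, hiI, hiJ⟩ := Finset.not_subset.mp hns
    exact ⟨ε i * (bM i - b i), fun x hx => ⟨i, hiI, by rw [hx.2 i hiJ]⟩⟩
  choose! c hc using key
  obtain ⟨c0, hc0⟩ := (hfin.image c).bddAbove
  set t : ℤ := max c0 0 + 1 with htdef
  have ht0 : 0 ≤ t := by
    have := le_max_right c0 0
    omega
  have htc : c0 < t := by
    have := le_max_left c0 0
    omega
  set s : Fin N → ℤ := fun i => if i ∈ I then t * ε i else 0 with hsdef
  have htail : ∀ x ∈ Cone (b + s) ε I, ∀ i ∈ I, t ≤ ε i * (x i - b i) := by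
    intro x hx i hi
    have h1 := hx.1 i hi
    have hsi : s i = t * ε i := by simp [hsdef, hi]
    have h2 : ε i * s i = t := by
      rw [hsi]
      rcases hε i with h | h <;> rw [h] <;> ring
    have h3 : ε i * (x i - (b + s) i) = ε i * (x i - b i) - ε i * s i := by
      simp only [Pi.add_apply]; ring
    rw [h3, h2] at h1
    linarith
  have hdisj : ∀ x ∈ Cone (b + s) ε I, x ∉ ⋃₀ 𝓛 := by
    rintro x hx ⟨M, hM, hxM⟩
    obtain ⟨i, hi, hle⟩ := hc M hM x hxM
    have h1 := htail x hx i hi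
    have hcM : c M ≤ c0 := hc0 (Set.mem_image_of_mem c hM)
    linarith
  have hsub : Cone (b + s) ε I ⊆ Cone b ε I := by
    intro x hx
    refine ⟨fun i hi => ?_, fun i hi => ?_⟩
    · have := htail x hx i hi
      linarith
    · have h1 := hx.2 i hi
      have : s i = 0 := by simp [hsdef, hi]
      rw [h1]
      simp [this]
  have hrank : IsOrthantOfRank (Cone (b + s) ε I) k := hI ▸ cone_isOrthant hε
  obtain ⟨hc1, hc2⟩ := commensurable_pair hL hrank hsub
  exact ⟨Cone (b + s) ε I, hrank, hsub, hc1, hc2, hdisj⟩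

lemma mulVec_single_eq {A : Matrix (Fin N) (Fin N) ℤ} {b : Fin N → ℤ} {I : Finset (Fin N)}
    (key : ∀ i ∈ I, A.mulVec (Pi.single i 1) = Pi.single i 1)
    {x : Fin N → ℤ} (hx : ∀ i ∉ I, x i = b i) :
    A.mulVec x = A.mulVec b + (x - b) := by
  have hdec : x - b = ∑ i ∈ I, (x i - b i) • Pi.single i (1 : ℤ) := by
    funext j
    rw [Finset.sum_apply]
    by_cases hj : j ∈ I
    · rw [Finset.sum_eq_single j]
      · simp
      · intro i _ hij
        have h0 : (Pi.single i 1 : Fin N → ℤ) j = 0 := Pi.single_eq_of_ne (Ne.symm hij) 1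
        simp [h0]
      · intro h; exact absurd hj h
    · rw [Finset.sum_eq_zero]
      · simp [hx j hj]
      · intro i hi
        have hij : j ≠ i := fun h => hj (h ▸ hi)
        have h0 : (Pi.single i 1 : Fin N → ℤ) j = 0 := Pi.single_eq_of_ne hij 1
        simp [h0]
  have h2 : A.mulVec (x - b) = x - b := by
    calc A.mulVec (x - b) = A.mulVecLin (∑ i ∈ I, (x i - b i) • Pi.single i (1 : ℤ)) := by
          rw [Matrix.mulVecLin_apply, hdec]
      _ = ∑ i ∈ I, (x i - b i) • A.mulVecLin (Pi.single i (1 : ℤ)) := by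
          rw [map_sum]
          exact Finset.sum_congr rfl fun i _ => by rw [map_smul]
      _ = ∑ i ∈ I, (x i - b i) • Pi.single i (1 : ℤ) := by
          exact Finset.sum_congr rfl fun i hi => by rw [Matrix.mulVecLin_apply, key i hi]
      _ = x - b := hdec.symm
  have h3 : A.mulVec x - A.mulVec b = x - b := by
    rw [← Matrix.mulVecLin_apply A x, ← Matrix.mulVecLin_apply A b, ← map_sub,
      Matrix.mulVecLin_apply]
    exact h2
  rw [← h3]; abel

lemma key_of_two_points {g : (Fin N → ℤ) → (Fin N → ℤ)} {a c : Fin N → ℤ}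
    {A : Matrix (Fin N) (Fin N) ℤ} {i : Fin N} {e : ℤ} (he : e ≠ 0)
    {p : Fin N → ℤ}
    (h1 : g p = a + A.mulVec p)
    (h2 : g (p + e • Pi.single i 1) = a + A.mulVec (p + e • Pi.single i 1))
    (h3 : g p = c + p)
    (h4 : g (p + e • Pi.single i 1) = c + (p + e • Pi.single i 1)) :
    A.mulVec (Pi.single i 1) = Pi.single i 1 := by
  have e1 : a + A.mulVec (p + e • Pi.single i 1) = c + (p + e • Pi.single i 1) := by
    rw [← h2, h4]
  have e2 : a + A.mulVec p = c + p := by rw [← h1, h3]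
  have hd : A.mulVec (p + e • Pi.single i 1) - A.mulVec p = e • Pi.single i 1 := by
    have h5 : A.mulVec (p + e • Pi.single i 1) = c + (p + e • Pi.single i 1) - a := by
      rw [← e1]; abel
    have h6 : A.mulVec p = c + p - a := by rw [← e2]; abel
    rw [h5, h6]; abel
  have hlin : A.mulVec (p + e • Pi.single i 1) - A.mulVec p = e • A.mulVec (Pi.single i 1) := by
    rw [← Matrix.mulVecLin_apply A (p + e • Pi.single i 1), ← Matrix.mulVecLin_apply A p,
      ← map_sub]
    have : p + e • Pi.single i 1 - p = e • Pi.single i (1 : ℤ) := by abel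
    rw [this, map_smul, Matrix.mulVecLin_apply]
  exact smul_right_injective (Fin N → ℤ) he (hlin.symm.trans hd)

lemma translationOn_of_key {g : (Fin N → ℤ) → (Fin N → ℤ)} {a : Fin N → ℤ}
    {A : Matrix (Fin N) (Fin N) ℤ} {b ε : Fin N → ℤ} {I : Finset (Fin N)}
    (hiso : ∀ x ∈ Cone b ε I, g x = a + A.mulVec x)
    (key : ∀ i ∈ I, A.mulVec (Pi.single i 1) = Pi.single i 1) :
    TranslationOn g (Cone b ε I) := by
  refine ⟨a + A.mulVec b - b, fun x hx => ?_⟩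
  rw [hiso x hx, mulVec_single_eq key hx.2]
  abel

end Aux

/-- the normal series `G_{k-1} ≤ C^{ord}(Γ^k) ≤ C(Γ^k) ≤ G_k`, and the
rigidity statement: a rank-`≤ k+1` element fixing all rank-`k` germs with their
orderings acts by a parallel translation on any rank-`(k+1)` orthant which it maps
isometrically to a commensurable orthant. -/
theorem stmt10 {N : ℕ} (S : Set (Fin N → ℤ)) (hS : IsOrthohedral S) (k : ℕ)
    (hk : k ≤ orthRank S) :
    (FixesGerm S k 1 ∧ TranslatesGerm S k 1) ∧
    (∀ j, j + 1 = k → ∀ g : Equiv.Perm (Fin N → ℤ), IsPeiPerm S g → rankLE g j →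
      rankLE g k ∧ FixesGerm S k g ∧ TranslatesGerm S k g) ∧
    ({g : Equiv.Perm (Fin N → ℤ) | IsPeiPerm S g ∧ rankLE g k ∧ FixesGerm S k g ∧
        TranslatesGerm S k g}
      ⊆ {g | IsPeiPerm S g ∧ rankLE g k ∧ FixesGerm S k g}) ∧
    ({g : Equiv.Perm (Fin N → ℤ) | IsPeiPerm S g ∧ rankLE g k ∧ FixesGerm S k g}
      ⊆ {g | IsPeiPerm S g ∧ rankLE g k}) ∧
    (∀ g : Equiv.Perm (Fin N → ℤ), IsPeiPerm S g → rankLE g (k + 1) →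
      FixesGerm S k g → TranslatesGerm S k g →
      ∀ L, IsOrthantOfRank L (k + 1) → L ⊆ S → IsometricOn (⇑g) L →
        Commensurable (⇑g '' L) L → TranslationOn (⇑g) L) := by
  classical
  have idfix : FixesGerm S k 1 := by
    intro L hL hLS
    obtain ⟨hc1, hc2⟩ := commensurable_pair hL hL subset_rfl
    refine ⟨L, hL, subset_rfl, hc1,
      ⟨0, 1, isOrthMat_one, fun x _ => by simp [Matrix.one_mulVec]⟩, ?_⟩
    have himg : ⇑(1 : Equiv.Perm (Fin N → ℤ)) '' L = L := by simp
    rw [himg]; exact hc2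
  have idtr : TranslatesGerm S k 1 := by
    intro L hL hLS
    obtain ⟨hc1, hc2⟩ := commensurable_pair hL hL subset_rfl
    refine ⟨L, 0, hL, subset_rfl, hc1, fun x _ => by simp, ?_⟩
    have himg : ⇑(1 : Equiv.Perm (Fin N → ℤ)) '' L = L := by simp
    rw [himg]; exact hc2
  refine ⟨⟨idfix, idtr⟩, ?_, fun g hg => ⟨hg.1, hg.2.1, hg.2.2.1⟩,
    fun g hg => ⟨hg.1, hg.2.1⟩, ?_⟩
  · -- G_{k-1} ≤ C^{ord}(Γ^k)
    intro j hj g hg hrj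
    obtain ⟨T, hTorth, hTrank, hTfix⟩ := hrj
    have hrkT : orthRank T < k := by omega
    refine ⟨⟨T, hTorth, by omega, hTfix⟩, ?_, ?_⟩
    · intro L hL hLS
      obtain ⟨L', hL'r, hL'sub, hc1, hc2, hdisj⟩ := exists_tail hTorth hrkT hL
      have hfixpt : ∀ x ∈ L', g x = x := fun x hx => hTfix x (hdisj x hx)
      have himg : ⇑g '' L' = L' := by rw [Set.image_congr hfixpt, Set.image_id']
      exact ⟨L', hL'r, hL'sub, hc1,
        ⟨0, 1, isOrthMat_one, fun x hx => by rw [hfixpt x hx]; simp [Matrix.one_mulVec]⟩,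
        by rw [himg]; exact hc2⟩
    · intro L hL hLS
      obtain ⟨L', hL'r, hL'sub, hc1, hc2, hdisj⟩ := exists_tail hTorth hrkT hL
      have hfixpt : ∀ x ∈ L', g x = x := fun x hx => hTfix x (hdisj x hx)
      have himg : ⇑g '' L' = L' := by rw [Set.image_congr hfixpt, Set.image_id']
      exact ⟨L', 0, hL'r, hL'sub, hc1, fun x hx => by rw [hfixpt x hx, zero_add],
        by rw [himg]; exact hc2⟩
  · -- rigidity on rank-(k+1) orthants
    intro g hgPei hgrk hFix hTG L hL hLS hIso hComm
    obtain ⟨a, A, hA, hiso⟩ := hIso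
    obtain ⟨b, ε, I, hI, hε, rfl⟩ := orthant_eq_cone hL
    apply translationOn_of_key hiso
    intro i hi
    by_cases hk0 : k = 0
    · -- rank-one case: use commensurability of the image
      subst hk0
      obtain ⟨i1, hI1⟩ := Finset.card_eq_one.mp (by simpa using hI)
      subst hI1
      rw [Finset.mem_singleton] at hi
      subst hi
      obtain ⟨π, εA, hεA, hm⟩ := signed_perm hA
      obtain ⟨m, hmdef⟩ : ∃ m, m = π.symm i := ⟨_, rfl⟩
      obtain ⟨η, hηdef⟩ : ∃ η, η = εA m := ⟨_, rfl⟩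
      have hpm : π m = i := by rw [hmdef]; exact π.apply_symm_apply i
      have hcol : A.mulVec (Pi.single i 1) = η • (Pi.single m 1 : Fin N → ℤ) := by
        funext l
        rw [hm]
        by_cases hl : l = m
        · subst hl
          rw [hpm]
          simp [hηdef]
        · have hpl : π l ≠ i := fun hh => hl (by
            rw [← hpm] at hh
            exact π.injective hh)
          simp [Pi.single_apply, hpl, hl]
      obtain ⟨hne, hr1, hr2⟩ := hComm
      have hLrank : IsOrthantOfRank (Cone b ε {i}) 1 := by simpa using hL
      have hLr1 : orthRank (Cone b ε {i}) = 1 := orthRank_eq hLrank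
      have hint1 : orthRank (⇑g '' Cone b ε {i} ∩ Cone b ε {i}) = 1 := by
        rw [← hr2, hLr1]
      obtain ⟨p, hp⟩ := hne
      have hmem0 : (0 : ℕ) ∈
          {n | ∃ R, IsOrthantOfRank R n ∧ R ⊆ ⇑g '' Cone b ε {i} ∩ Cone b ε {i}} :=
        ⟨{p}, singleton_orthant p, by simpa using hp⟩
      have hbdd : BddAbove
          {n | ∃ R, IsOrthantOfRank R n ∧ R ⊆ ⇑g '' Cone b ε {i} ∩ Cone b ε {i}} := by
        refine ⟨N, ?_⟩
        rintro n ⟨R, hR, -⟩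
        exact orthant_rank_le hR
      have h1mem : ∃ R, IsOrthantOfRank R 1 ∧
          R ⊆ ⇑g '' Cone b ε {i} ∩ Cone b ε {i} := by
        have hsup := Nat.sSup_mem ⟨0, hmem0⟩ hbdd
        have heq1 : sSup
            {n | ∃ R, IsOrthantOfRank R n ∧ R ⊆ ⇑g '' Cone b ε {i} ∩ Cone b ε {i}} = 1 :=
          hint1
        rwa [heq1] at hsup
      obtain ⟨R, hR1, hRsub⟩ := h1mem
      obtain ⟨r, δ, Jr, hJr, hδ, rfl⟩ := orthant_eq_cone hR1
      have hRL : Cone r δ Jr ⊆ Cone b ε {i} := hRsub.trans Set.inter_subset_right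
      have hJri : Jr = {i} := by
        apply Finset.eq_of_subset_of_card_le (rays_subset hδ hRL)
        simp [hJr]
      subst hJri
      have hRg : Cone r δ {i} ⊆ ⇑g '' Cone b ε {i} := hRsub.trans Set.inter_subset_left
      have hδ2 : δ i * δ i = 1 := by rcases hδ i with h | h <;> rw [h] <;> norm_num
      have hmain : ∀ t : ℤ, 0 ≤ t → ∃ d : ℤ,
          0 ≤ ε i * d ∧ 0 ≤ ε i * (r i + t * δ i - b i) ∧
          r + (t * δ i) • (Pi.single i 1 : Fin N → ℤ)
            = (a + A.mulVec b) + (d * η) • (Pi.single m 1 : Fin N → ℤ) := by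
        intro t ht
        have hxR : r + (t * δ i) • (Pi.single i 1 : Fin N → ℤ) ∈ Cone r δ {i} := by
          refine ray_mem_cone (Finset.mem_singleton_self i) ?_ (base_mem_cone r δ {i})
          have hval : δ i * (t * δ i) = t := by
            rw [show δ i * (t * δ i) = (δ i * δ i) * t from by ring, hδ2, one_mul]
          rw [hval]; exact ht
        have hxL := hRL hxR
        have hxval : (r + (t * δ i) • (Pi.single i 1 : Fin N → ℤ)) i = r i + t * δ i := by
          simp
        have hcone := hxL.1 i (Finset.mem_singleton_self i)
        rw [hxval] at hcone
        obtain ⟨y, hyL, hgy⟩ := hRg hxR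
        have hyd : y = b + (y i - b i) • (Pi.single i 1 : Fin N → ℤ) := by
          funext l
          by_cases hl : l = i
          · subst hl; simp
          · have h0 := hyL.2 l (by simp [hl])
            simp [Pi.single_apply, hl, h0]
        refine ⟨y i - b i, hyL.1 i (Finset.mem_singleton_self i), hcone, ?_⟩
        have hAy : A.mulVec y
            = A.mulVec b + ((y i - b i) * η) • (Pi.single m 1 : Fin N → ℤ) := by
          calc A.mulVec y
              = A.mulVecLin (b + (y i - b i) • (Pi.single i 1 : Fin N → ℤ)) := by
                rw [Matrix.mulVecLin_apply, ← hyd]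
            _ = A.mulVec b + (y i - b i) • A.mulVec (Pi.single i 1) := by
                rw [map_add, map_smul, Matrix.mulVecLin_apply, Matrix.mulVecLin_apply]
            _ = _ := by rw [hcol, smul_smul]
        rw [← hgy, hiso y hyL, hAy]
        abel
      have hD := hδ i
      have hmi : m = i := by
        by_contra hmne
        have hmi : i ≠ m := fun h => hmne h.symm
        obtain ⟨d0, -, -, h0⟩ := hmain 0 le_rfl
        obtain ⟨d1, -, -, h1⟩ := hmain 1 zero_le_one
        have e0 := congrFun h0 i
        have e1 := congrFun h1 i
        simp [Pi.single_apply, hmi] at e0 e1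
        rcases hD with h | h <;> rw [h] at e1 <;> linarith
      have hη : η = 1 := by
        rcases hεA m with h | h
        · exact hηdef.trans h
        · exfalso
          have hηm : η = -1 := hηdef.trans h
          obtain ⟨d, hd, hcone, heq⟩ :=
            hmain (|a i + A.mulVec b i - r i| + |r i - b i| + 1) (by positivity)
          have e := congrFun heq i
          rw [hmi] at e
          simp [Pi.single_apply] at e
          rw [hηm] at e
          rcases hε i with hE | hE <;> rcases hD with hDD | hDD <;>
            rw [hE] at hd hcone <;> rw [hDD] at e hcone <;>
            linarith [le_abs_self (a i + A.mulVec b i - r i),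
              neg_abs_le (a i + A.mulVec b i - r i),
              le_abs_self (r i - b i), neg_abs_le (r i - b i),
              abs_nonneg (a i + A.mulVec b i - r i), abs_nonneg (r i - b i)]
      rw [hcol, hmi, hη, one_smul]
    · -- higher rank: use translations on rank-k faces
      obtain ⟨i0, hi0I, hi0ne⟩ := Finset.exists_mem_ne (show 1 < I.card by omega) i
      have hcard : (I.erase i0).card = k := by
        rw [Finset.card_erase_of_mem hi0I, hI]
        omega
      have hF : IsOrthantOfRank (Cone b ε (I.erase i0)) k := hcard ▸ cone_isOrthant hε
      have hFL : Cone b ε (I.erase i0) ⊆ Cone b ε I := cone_mono (Finset.erase_subset i0 I)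
      obtain ⟨L'', a'', hL''r, hL''sub, -, htr, -⟩ := hTG _ hF (hFL.trans hLS)
      obtain ⟨b'', ε'', J, hJ, hε'', rfl⟩ := orthant_eq_cone hL''r
      have hJI : J = I.erase i0 := by
        apply Finset.eq_of_subset_of_card_le (rays_subset hε'' hL''sub)
        rw [hcard, hJ]
      have hiJ : i ∈ J := by
        rw [hJI]
        exact Finset.mem_erase.mpr ⟨Ne.symm hi0ne, hi⟩
      have hq : b'' + ε'' i • (Pi.single i 1 : Fin N → ℤ) ∈ Cone b'' ε'' J := by
        refine ray_mem_cone hiJ ?_ (base_mem_cone b'' ε'' J)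
        rcases hε'' i with h | h <;> rw [h] <;> norm_num
      have hsubL : Cone b'' ε'' J ⊆ Cone b ε I := hL''sub.trans hFL
      have hene : ε'' i ≠ 0 := by rcases hε'' i with h | h <;> rw [h] <;> norm_num
      exact key_of_two_points hene (hiso _ (hsubL (base_mem_cone b'' ε'' J)))
        (hiso _ (hsubL hq)) (htr _ (base_mem_cone b'' ε'' J)) (htr _ hq)

end PeiPaper
end
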